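/- arXiv:2006.14818 — 4 statements merged into one kernel-verified Lean document; each statement's English description precedes it below -/
import Mathlib

section
/- In the multivariate linear EIV model under assumptions (i)-(iv), the error u in the representation y = b_x + C^T z + B_x^T x + u satisfies Cov(u) = Σ_e + Cov(B^T γ1 + γ2), where (γ1^T, γ2^T)^T ~ N(0, V) with V = Σ11 − Σ12 Σ22^{-1} Σ12^T; in particular, if either Σ_e is positive definite or V is positive definite, then Cov(u) is positive definite. -/
open MeasureTheory ProbabilityTheory Matrix
open scoped NNReal

noncomputable section

def vmean {Ω : Type*} [MeasurableSpace Ω] (P : Measure Ω) {n : ℕ}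
    (X : Ω → Fin n → ℝ) : Fin n → ℝ :=
  fun i => ∫ ω, X ω i ∂P

def vcov {Ω : Type*} [MeasurableSpace Ω] (P : Measure Ω) {n m : ℕ}
    (X : Ω → Fin n → ℝ) (Y : Ω → Fin m → ℝ) : Matrix (Fin n) (Fin m) ℝ :=
  Matrix.of fun i j =>
    ∫ ω, (X ω i - vmean P X i) * (Y ω j - vmean P Y j) ∂P

def IsGaussianVec {Ω : Type*} [MeasurableSpace Ω] (P : Measure Ω) {n : ℕ}
    (X : Ω → Fin n → ℝ) : Prop :=
  ∀ l : Fin n → ℝ, ∃ (m : ℝ) (v : ℝ≥0),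
    Measure.map (fun ω => ∑ i, l i * X ω i) P = gaussianReal m v

namespace Stmt4Aux

variable {Ω : Type*} [MeasurableSpace Ω] (P : Measure Ω) [IsProbabilityMeasure P]

lemma integrable_mul2 {f g : Ω → ℝ} (hf : MemLp f 2 P) (hg : MemLp g 2 P) :
    Integrable (fun ω => f ω * g ω) P := by
  have h : MemLp (f • g) 1 P := hg.smul hf
  rw [memLp_one_iff_integrable] at h
  exact h

/-- scalar covariance -/
def scov (f g : Ω → ℝ) : ℝ :=
  ∫ ω, (f ω - ∫ ω', f ω' ∂P) * (g ω - ∫ ω', g ω' ∂P) ∂P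

lemma vcov_apply {n p : ℕ} (X : Ω → Fin n → ℝ) (Y : Ω → Fin p → ℝ) (i : Fin n) (j : Fin p) :
    vcov P X Y i j = scov P (fun ω => X ω i) (fun ω => Y ω j) := rfl

lemma scov_comm (f g : Ω → ℝ) : scov P f g = scov P g f := by
  unfold scov
  exact integral_congr_ae (Filter.Eventually.of_forall fun ω => by ring)

lemma scov_eq {f g : Ω → ℝ} (hf : MemLp f 2 P) (hg : MemLp g 2 P) :
    scov P f g = (∫ ω, f ω * g ω ∂P) - (∫ ω, f ω ∂P) * (∫ ω, g ω ∂P) := by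
  have hfi : Integrable f P := hf.integrable one_le_two
  have hgi : Integrable g P := hg.integrable one_le_two
  have hfg := integrable_mul2 P hf hg
  set a := ∫ ω', f ω' ∂P with ha
  set b := ∫ ω', g ω' ∂P with hb
  have h1 : ∀ ω, (f ω - a) * (g ω - b) = f ω * g ω - a * g ω - b * f ω + a * b :=
    fun ω => by ring
  have i1 : Integrable (fun ω => f ω * g ω - a * g ω) P := hfg.sub (hgi.const_mul a)
  have i2 : Integrable (fun ω => f ω * g ω - a * g ω - b * f ω) P := i1.sub (hfi.const_mul b)
  unfold scov
  rw [← ha, ← hb]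
  simp_rw [h1]
  rw [integral_add i2 (integrable_const _), integral_sub i1 (hfi.const_mul b),
    integral_sub hfg (hgi.const_mul a), integral_const_mul, integral_const_mul,
    integral_const]
  simp [measure_univ]
  ring

lemma scov_indep {f g : Ω → ℝ} (h : IndepFun f g P) (hf : MemLp f 2 P) (hg : MemLp g 2 P) :
    scov P f g = 0 := by
  rw [scov_eq P hf hg]
  have := h.integral_mul_eq_mul_integral hf.aestronglyMeasurable hg.aestronglyMeasurable
  simp only [Pi.mul_apply] at this ⊢
  rw [show (fun ω => f ω * g ω) = f * g from rfl] at *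
  rw [this]
  ring


lemma scov_add_left {f g h : Ω → ℝ} (hf : MemLp f 2 P) (hg : MemLp g 2 P)
    (hh : MemLp h 2 P) :
    scov P (fun ω => f ω + g ω) h = scov P f h + scov P g h := by
  have hfg : MemLp (fun ω => f ω + g ω) 2 P := hf.add hg
  rw [scov_eq P hfg hh, scov_eq P hf hh, scov_eq P hg hh]
  have e1 : (∫ ω, (f ω + g ω) * h ω ∂P) = (∫ ω, f ω * h ω ∂P) + ∫ ω, g ω * h ω ∂P := by
    rw [← integral_add (integrable_mul2 P hf hh) (integrable_mul2 P hg hh)]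
    exact integral_congr_ae (Filter.Eventually.of_forall fun ω => by ring)
  have e2 : (∫ ω, f ω + g ω ∂P) = (∫ ω, f ω ∂P) + ∫ ω, g ω ∂P :=
    integral_add (hf.integrable one_le_two) (hg.integrable one_le_two)
  rw [e1, e2]; ring

lemma scov_const_mul_left {f h : Ω → ℝ} (c : ℝ) (hf : MemLp f 2 P) (hh : MemLp h 2 P) :
    scov P (fun ω => c * f ω) h = c * scov P f h := by
  rw [scov_eq P (hf.const_mul c) hh, scov_eq P hf hh]
  have e1 : (∫ ω, c * f ω * h ω ∂P) = c * ∫ ω, f ω * h ω ∂P := by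
    rw [← integral_const_mul]
    exact integral_congr_ae (Filter.Eventually.of_forall fun ω => by ring)
  rw [e1, integral_const_mul]; ring

lemma scov_const_left (c : ℝ) (h : Ω → ℝ) : scov P (fun _ => c) h = 0 := by
  unfold scov
  simp [measure_univ]

lemma scov_sum_left {κ : Type*} (s : Finset κ) (F : κ → Ω → ℝ) {h : Ω → ℝ}
    (hF : ∀ k ∈ s, MemLp (F k) 2 P) (hh : MemLp h 2 P) :
    scov P (fun ω => ∑ k ∈ s, F k ω) h = ∑ k ∈ s, scov P (F k) h := by
  classical
  induction s using Finset.induction_on with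
  | empty => simpa using scov_const_left P 0 h
  | insert a s' hk ih =>
    have hFa : MemLp (F a) 2 P := hF a (Finset.mem_insert_self a s')
    have hFs : MemLp (fun ω => ∑ k ∈ s', F k ω) 2 P :=
      memLp_finset_sum s' fun k hks => hF k (Finset.mem_insert_of_mem hks)
    have hrw : (fun ω => ∑ k ∈ insert a s', F k ω) = fun ω => F a ω + ∑ k ∈ s', F k ω := by
      funext ω; rw [Finset.sum_insert hk]
    rw [hrw, Finset.sum_insert hk, scov_add_left P hFa hFs hh,
      ih fun k hks => hF k (Finset.mem_insert_of_mem hks)]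


lemma scov_sub_left {f g h : Ω → ℝ} (hf : MemLp f 2 P) (hg : MemLp g 2 P)
    (hh : MemLp h 2 P) :
    scov P (fun ω => f ω - g ω) h = scov P f h - scov P g h := by
  have hfg : MemLp (fun ω => f ω - g ω) 2 P := hf.sub hg
  rw [scov_eq P hfg hh, scov_eq P hf hh, scov_eq P hg hh]
  have e1 : (∫ ω, (f ω - g ω) * h ω ∂P) = (∫ ω, f ω * h ω ∂P) - ∫ ω, g ω * h ω ∂P := by
    rw [← integral_sub (integrable_mul2 P hf hh) (integrable_mul2 P hg hh)]
    exact integral_congr_ae (Filter.Eventually.of_forall fun ω => by ring)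
  have e2 : (∫ ω, f ω - g ω ∂P) = (∫ ω, f ω ∂P) - ∫ ω, g ω ∂P :=
    integral_sub (hf.integrable one_le_two) (hg.integrable one_le_two)
  rw [e1, e2]; ring

/-- all components in L2 -/
def L2V {n : ℕ} (X : Ω → Fin n → ℝ) : Prop := ∀ i, MemLp (fun ω => X ω i) 2 P

variable {n p k : ℕ}

lemma L2V_const (c : Fin n → ℝ) : L2V P (fun _ => c) := fun _ => memLp_const _

lemma L2V_add {X X' : Ω → Fin n → ℝ} (hX : L2V P X) (hX' : L2V P X') :
    L2V P (fun ω => X ω + X' ω) := fun i => (hX i).add (hX' i)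

lemma L2V_mulVec {X : Ω → Fin n → ℝ} (hX : L2V P X) (A : Matrix (Fin k) (Fin n) ℝ) :
    L2V P (fun ω => A.mulVec (X ω)) := by
  intro i
  have h : (fun ω => A.mulVec (X ω) i) = fun ω => ∑ l, A i l * X ω l := rfl
  rw [h]
  exact memLp_finset_sum _ fun l _ => (hX l).const_mul _

lemma L2V_affine {X : Ω → Fin n → ℝ} (hX : L2V P X) (c : Fin k → ℝ)
    (A : Matrix (Fin k) (Fin n) ℝ) : L2V P (fun ω => c + A.mulVec (X ω)) :=
  L2V_add P (L2V_const P c) (L2V_mulVec P hX A)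

lemma L2V_resid {X : Ω → Fin k → ℝ} {W : Ω → Fin n → ℝ} (hX : L2V P X) (hW : L2V P W)
    (c : Fin k → ℝ) (A : Matrix (Fin k) (Fin n) ℝ) :
    L2V P (fun ω => X ω - (c + A.mulVec (W ω))) := fun i =>
  (hX i).sub (L2V_affine P hW c A i)

lemma vcov_comm' (X : Ω → Fin n → ℝ) (Y : Ω → Fin p → ℝ) :
    vcov P X Y = (vcov P Y X)ᵀ := by
  ext i j
  exact scov_comm P _ _

lemma vcov_add_left {X X' : Ω → Fin n → ℝ} {Y : Ω → Fin p → ℝ}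
    (hX : L2V P X) (hX' : L2V P X') (hY : L2V P Y) :
    vcov P (fun ω => X ω + X' ω) Y = vcov P X Y + vcov P X' Y := by
  ext i j
  exact scov_add_left P (hX i) (hX' i) (hY j)

lemma vcov_sub_left {X X' : Ω → Fin n → ℝ} {Y : Ω → Fin p → ℝ}
    (hX : L2V P X) (hX' : L2V P X') (hY : L2V P Y) :
    vcov P (fun ω => X ω - X' ω) Y = vcov P X Y - vcov P X' Y := by
  ext i j
  exact scov_sub_left P (hX i) (hX' i) (hY j)

lemma vcov_const_left (c : Fin n → ℝ) (Y : Ω → Fin p → ℝ) :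
    vcov P (fun _ => c) Y = 0 := by
  ext i j
  exact scov_const_left P (c i) _

lemma vcov_mulVec_left (A : Matrix (Fin k) (Fin n) ℝ) {X : Ω → Fin n → ℝ}
    {Y : Ω → Fin p → ℝ} (hX : L2V P X) (hY : L2V P Y) :
    vcov P (fun ω => A.mulVec (X ω)) Y = A * vcov P X Y := by
  ext i j
  rw [Matrix.mul_apply]
  have h : vcov P (fun ω => A.mulVec (X ω)) Y i j
      = scov P (fun ω => ∑ l, A i l * X ω l) (fun ω => Y ω j) := rfl
  rw [h, scov_sum_left P Finset.univ (fun l ω => A i l * X ω l)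
    (fun l _ => (hX l).const_mul _) (hY j)]
  exact Finset.sum_congr rfl fun l _ => scov_const_mul_left P _ (hX l) (hY j)

lemma vcov_resid_left {X : Ω → Fin k → ℝ} {W : Ω → Fin n → ℝ} {Y : Ω → Fin p → ℝ}
    (hX : L2V P X) (hW : L2V P W) (hY : L2V P Y) (c : Fin k → ℝ)
    (A : Matrix (Fin k) (Fin n) ℝ) :
    vcov P (fun ω => X ω - (c + A.mulVec (W ω))) Y = vcov P X Y - A * vcov P W Y := by
  rw [vcov_sub_left P hX (L2V_affine P hW c A) hY,
    vcov_add_left P (L2V_const P c) (L2V_mulVec P hW A) hY, vcov_const_left,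
    vcov_mulVec_left P A hW hY, zero_add]

lemma vcov_resid_right {X : Ω → Fin k → ℝ} {W : Ω → Fin n → ℝ} {Y : Ω → Fin p → ℝ}
    (hX : L2V P X) (hW : L2V P W) (hY : L2V P Y) (c : Fin k → ℝ)
    (A : Matrix (Fin k) (Fin n) ℝ) :
    vcov P Y (fun ω => X ω - (c + A.mulVec (W ω))) = vcov P Y X - vcov P Y W * Aᵀ := by
  rw [vcov_comm' P Y (fun ω => X ω - (c + A.mulVec (W ω))),
    vcov_resid_left P hX hW hY c A, Matrix.transpose_sub, Matrix.transpose_mul,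
    ← vcov_comm' P Y X, ← vcov_comm' P Y W]

lemma vcov_add_right {X : Ω → Fin p → ℝ} {Y Y' : Ω → Fin n → ℝ}
    (hX : L2V P X) (hY : L2V P Y) (hY' : L2V P Y') :
    vcov P X (fun ω => Y ω + Y' ω) = vcov P X Y + vcov P X Y' := by
  rw [vcov_comm' P X (fun ω => Y ω + Y' ω), vcov_add_left P hY hY' hX,
    Matrix.transpose_add, ← vcov_comm' P X Y, ← vcov_comm' P X Y']

lemma vcov_mulVec_right (A : Matrix (Fin k) (Fin n) ℝ) {Y : Ω → Fin n → ℝ}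
    {X : Ω → Fin p → ℝ} (hY : L2V P Y) (hX : L2V P X) :
    vcov P X (fun ω => A.mulVec (Y ω)) = vcov P X Y * Aᵀ := by
  rw [vcov_comm' P X (fun ω => A.mulVec (Y ω)), vcov_mulVec_left P A hY hX,
    Matrix.transpose_mul, ← vcov_comm' P X Y]


lemma vcov_quad {X : Ω → Fin n → ℝ} (hX : L2V P X) (a : Fin n → ℝ) :
    a ⬝ᵥ (vcov P X X).mulVec a
      = ∫ ω, (∑ i, a i * (X ω i - vmean P X i))^2 ∂P := by
  classical
  set c : Fin n → Ω → ℝ := fun i ω => a i * (X ω i - vmean P X i) with hc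
  have hcL2 : ∀ i, MemLp (c i) 2 P := fun i =>
    ((hX i).sub (memLp_const _)).const_mul _
  have hint : ∀ i j, Integrable (fun ω => c i ω * c j ω) P := fun i j =>
    integrable_mul2 P (hcL2 i) (hcL2 j)
  have hsq : ∀ ω, (∑ i, a i * (X ω i - vmean P X i))^2
      = ∑ i, ∑ j, c i ω * c j ω := by
    intro ω
    rw [sq, Finset.sum_mul_sum]
  have h1 : (∫ ω, (∑ i, a i * (X ω i - vmean P X i))^2 ∂P)
      = ∑ i, ∑ j, ∫ ω, c i ω * c j ω ∂P := by
    simp_rw [hsq]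
    rw [integral_finset_sum _ fun i _ => integrable_finset_sum _ fun j _ => hint i j]
    exact Finset.sum_congr rfl fun i _ => integral_finset_sum _ fun j _ => hint i j
  rw [h1]
  simp only [dotProduct, Matrix.mulVec, Finset.mul_sum]
  refine Finset.sum_congr rfl fun i _ => Finset.sum_congr rfl fun j _ => ?_
  have h2 : ∀ ω, c i ω * c j ω
      = a i * (((X ω i - vmean P X i) * (X ω j - vmean P X j)) * a j) := by
    intro ω; simp only [hc]; ring
  simp_rw [h2]
  rw [integral_const_mul, integral_mul_const]
  rfl

lemma vcov_self_symm (X : Ω → Fin n → ℝ) : (vcov P X X)ᵀ = vcov P X X := by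
  ext i j
  exact scov_comm P _ _

lemma vcov_self_isHermitian (X : Ω → Fin n → ℝ) : (vcov P X X).IsHermitian := by
  have h := vcov_self_symm P X
  rw [Matrix.IsHermitian]
  ext i j
  rw [Matrix.conjTranspose_apply, star_trivial]
  exact congrFun (congrFun h i) j

lemma vcov_posSemidef {X : Ω → Fin n → ℝ} (hX : L2V P X) :
    (vcov P X X).PosSemidef := by
  refine posSemidef_iff_dotProduct_mulVec.mpr ⟨vcov_self_isHermitian P X, fun a => ?_⟩
  have hsa : star a = a := by funext i; simp
  rw [hsa, vcov_quad P hX a]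
  exact integral_nonneg fun ω => sq_nonneg _

lemma fromBlocks_sub' {l m n o : Type*} (A A' : Matrix n l ℝ) (B B' : Matrix n m ℝ)
    (C C' : Matrix o l ℝ) (D D' : Matrix o m ℝ) :
    Matrix.fromBlocks A B C D - Matrix.fromBlocks A' B' C' D'
      = Matrix.fromBlocks (A - A') (B - B') (C - C') (D - D') := by
  ext (i | i) (j | j) <;> simp [Matrix.fromBlocks]

end Stmt4Aux

open Stmt4Aux

/-- In the multivariate linear EIV model under assumptions (i)–(iv), the
error `u = y − (bₓ + Cᵀ z + Bₓᵀ x)` of the representation satisfies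
`Cov(u) = Σ_e + Cov(Bᵀ γ₁ + γ₂)`, where `γ₁ = ξ − E[ξ|x]`, `γ₂ = ε − E[ε|x]` and
`(γ₁ᵀ, γ₂ᵀ)ᵀ ~ N(0, V)` with `V = Σ₁₁ − Σ₁₂ Σ₂₂⁻¹ Σ₁₂ᵀ`; in particular, if either `Σ_e`
or `V` is positive definite, then `Cov(u)` is positive definite. -/
theorem stmt4 {Ω : Type*} [MeasurableSpace Ω] (P : Measure Ω) [IsProbabilityMeasure P]
    {d q m : ℕ}
    (y : Ω → Fin d → ℝ) (z : Ω → Fin q → ℝ) (ξ δ x : Ω → Fin m → ℝ)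
    (e ε : Ω → Fin d → ℝ)
    (hym : Measurable y) (hzm : Measurable z) (hξm : Measurable ξ)
    (hδm : Measurable δ) (hem : Measurable e) (hεm : Measurable ε)
    (b : Fin d → ℝ) (C : Matrix (Fin q) (Fin d) ℝ) (B : Matrix (Fin m) (Fin d) ℝ)
    (hy : ∀ ω, y ω = b + Cᵀ.mulVec (z ω) + Bᵀ.mulVec (ξ ω) + e ω + ε ω)
    (hx : ∀ ω, x ω = ξ ω + δ ω)
    (hindep₁ : ProbabilityTheory.IndepFun z (fun ω => (ξ ω, e ω, ε ω, δ ω)) P)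
    (hindep₂ : ProbabilityTheory.IndepFun ξ (fun ω => (e ω, ε ω, δ ω)) P)
    (hindep₃ : ProbabilityTheory.IndepFun e (fun ω => (ε ω, δ ω)) P)
    (hL2z : ∀ i, MeasureTheory.MemLp (fun ω => z ω i) 2 P)
    (hL2ξ : ∀ i, MeasureTheory.MemLp (fun ω => ξ ω i) 2 P)
    (hL2e : ∀ i, MeasureTheory.MemLp (fun ω => e ω i) 2 P)
    (hL2ε : ∀ i, MeasureTheory.MemLp (fun ω => ε ω i) 2 P)
    (hL2δ : ∀ i, MeasureTheory.MemLp (fun ω => δ ω i) 2 P)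
    (hSz : (vcov P z z).det ≠ 0) (hSx : (vcov P x x).det ≠ 0)
    (he0 : vmean P e = 0) (hε0 : vmean P ε = 0) (hδ0 : vmean P δ = 0)
    (hGauss : IsGaussianVec P (fun ω => Fin.append (ε ω) (Fin.append (δ ω) (ξ ω))))
    (μ : Fin m → ℝ) (hμ : μ = vmean P x)
    (Sεδ : Matrix (Fin d) (Fin m) ℝ) (hSεδ : ∀ i j, Sεδ i j = ∫ ω, ε ω i * δ ω j ∂P)
    -- the representation error and the residual Gaussian parts
    (bx : Fin d → ℝ) (Bx : Matrix (Fin m) (Fin d) ℝ)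
    (hbx : bx = b + (Bᵀ * vcov P δ δ * (vcov P x x)⁻¹).mulVec μ
        - (Sεδ * (vcov P x x)⁻¹).mulVec μ)
    (hBx : Bxᵀ = Bᵀ * vcov P ξ ξ * (vcov P x x)⁻¹ + Sεδ * (vcov P x x)⁻¹)
    (u : Ω → Fin d → ℝ)
    (hu : ∀ ω, u ω = y ω - (bx + Cᵀ.mulVec (z ω) + Bxᵀ.mulVec (x ω)))
    (γ₁ : Ω → Fin m → ℝ) (γ₂ : Ω → Fin d → ℝ)
    -- γ₁ = ξ − E[ξ|x] and γ₂ = ε − E[ε|x], written via the Gaussian conditioning formulas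
    (hγ₁ : ∀ ω, γ₁ ω = ξ ω - ((vcov P δ δ * (vcov P x x)⁻¹).mulVec μ
        + (vcov P ξ ξ * (vcov P x x)⁻¹).mulVec (x ω)))
    (hγ₂ : ∀ ω, γ₂ ω = ε ω - (Sεδ * (vcov P x x)⁻¹).mulVec (x ω - μ))
    -- the matrix V = Σ₁₁ − Σ₁₂ Σ₂₂⁻¹ Σ₁₂ᵀ
    (V : Matrix (Fin m ⊕ Fin d) (Fin m ⊕ Fin d) ℝ)
    (hV : V = Matrix.fromBlocks (vcov P ξ ξ) 0 0 (vcov P ε ε)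
        - Matrix.fromRows (vcov P ξ ξ) Sεδ * (vcov P x x)⁻¹
            * (Matrix.fromRows (vcov P ξ ξ) Sεδ)ᵀ) :
    vcov P u u = vcov P e e + vcov P (fun ω => Bᵀ.mulVec (γ₁ ω) + γ₂ ω)
        (fun ω => Bᵀ.mulVec (γ₁ ω) + γ₂ ω)
      ∧ (((vcov P e e).PosDef ∨ V.PosDef) → (vcov P u u).PosDef) := by
  classical
  -- abbreviations
  set K := vcov P ξ ξ with hK
  set E := vcov P ε ε with hE
  set Dm := vcov P δ δ with hDm
  set Si := (vcov P x x)⁻¹ with hSi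
  set A1 : Matrix (Fin m) (Fin m) ℝ := K * Si with hA1
  set A2 : Matrix (Fin d) (Fin m) ℝ := Sεδ * Si with hA2
  set c1 : Fin m → ℝ := (Dm * Si).mulVec μ with hc1
  set c2 : Fin d → ℝ := -(A2.mulVec μ) with hc2
  -- pointwise forms
  have hxf : x = fun ω => ξ ω + δ ω := funext hx
  have hγ₁f : γ₁ = fun ω => ξ ω - (c1 + A1.mulVec (x ω)) := funext hγ₁
  have hγ₂f : γ₂ = fun ω => ε ω - (c2 + A2.mulVec (x ω)) := by
    funext ω
    rw [hγ₂ ω, Matrix.mulVec_sub, hc2]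
    abel
  -- L2 facts
  have hL2x : L2V P x := by
    intro i
    rw [hxf]
    exact (hL2ξ i).add (hL2δ i)
  have hL2γ₁ : L2V P γ₁ := by rw [hγ₁f]; exact L2V_resid P hL2ξ hL2x c1 A1
  have hL2γ₂ : L2V P γ₂ := by rw [hγ₂f]; exact L2V_resid P hL2ε hL2x c2 A2
  have hL2Bγ₁ : L2V P (fun ω => Bᵀ.mulVec (γ₁ ω)) := L2V_mulVec P hL2γ₁ Bᵀ
  have hL2g : L2V P (fun ω => Bᵀ.mulVec (γ₁ ω) + γ₂ ω) := L2V_add P hL2Bγ₁ hL2γ₂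
  -- componentwise independence
  have hIeξ : ∀ (i : Fin d) (j : Fin m), IndepFun (fun ω => e ω i) (fun ω => ξ ω j) P :=
    fun i j => (hindep₂.comp (measurable_pi_apply j)
      ((measurable_pi_apply i).comp measurable_fst)).symm
  have hIξε : ∀ (i : Fin m) (j : Fin d), IndepFun (fun ω => ξ ω i) (fun ω => ε ω j) P :=
    fun i j => hindep₂.comp (measurable_pi_apply i)
      ((measurable_pi_apply j).comp (measurable_fst.comp measurable_snd))
  have hIξδ : ∀ (i : Fin m) (j : Fin m), IndepFun (fun ω => ξ ω i) (fun ω => δ ω j) P :=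
    fun i j => hindep₂.comp (measurable_pi_apply i)
      ((measurable_pi_apply j).comp (measurable_snd.comp measurable_snd))
  have hIeε : ∀ (i : Fin d) (j : Fin d), IndepFun (fun ω => e ω i) (fun ω => ε ω j) P :=
    fun i j => hindep₃.comp (measurable_pi_apply i)
      ((measurable_pi_apply j).comp measurable_fst)
  have hIeδ : ∀ (i : Fin d) (j : Fin m), IndepFun (fun ω => e ω i) (fun ω => δ ω j) P :=
    fun i j => hindep₃.comp (measurable_pi_apply i)
      ((measurable_pi_apply j).comp measurable_snd)
  -- zero covariances
  have hveξ : vcov P e ξ = 0 := by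
    ext i j
    simp only [Matrix.zero_apply]
    exact scov_indep P (hIeξ i j) (hL2e i) (hL2ξ j)
  have hvξε : vcov P ξ ε = 0 := by
    ext i j
    simp only [Matrix.zero_apply]
    exact scov_indep P (hIξε i j) (hL2ξ i) (hL2ε j)
  have hvξδ : vcov P ξ δ = 0 := by
    ext i j
    simp only [Matrix.zero_apply]
    exact scov_indep P (hIξδ i j) (hL2ξ i) (hL2δ j)
  have hveε : vcov P e ε = 0 := by
    ext i j
    simp only [Matrix.zero_apply]
    exact scov_indep P (hIeε i j) (hL2e i) (hL2ε j)
  have hveδ : vcov P e δ = 0 := by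
    ext i j
    simp only [Matrix.zero_apply]
    exact scov_indep P (hIeδ i j) (hL2e i) (hL2δ j)
  have hvεδ : vcov P ε δ = Sεδ := by
    ext i j
    have hmε : (∫ ω, ε ω i ∂P) = 0 := by simpa [vmean] using congrFun hε0 i
    rw [vcov_apply, scov_eq P (hL2ε i) (hL2δ j), hSεδ i j, hmε, zero_mul, sub_zero]
  -- covariances with x
  have hvξx : vcov P ξ x = K := by
    rw [hxf, vcov_add_right P hL2ξ hL2ξ hL2δ, hvξδ, add_zero, hK]
  have hKsym : Kᵀ = K := vcov_self_symm P ξ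
  have hvxξ : vcov P x ξ = K := by
    rw [vcov_comm' P x ξ, hvξx, hKsym]
  have hvεξ : vcov P ε ξ = 0 := by
    rw [vcov_comm' P ε ξ, hvξε, Matrix.transpose_zero]
  have hvεx : vcov P ε x = Sεδ := by
    rw [hxf, vcov_add_right P hL2ε hL2ξ hL2δ, hvεξ, hvεδ, zero_add]
  have hvxε : vcov P x ε = Sεδᵀ := by
    rw [vcov_comm' P x ε, hvεx]
  have hvex : vcov P e x = 0 := by
    rw [hxf, vcov_add_right P hL2e hL2ξ hL2δ, hveξ, hveδ, add_zero]
  -- inverse facts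
  have hunit : IsUnit (vcov P x x).det := isUnit_iff_ne_zero.mpr hSx
  have hSsym : (vcov P x x)ᵀ = vcov P x x := vcov_self_symm P x
  have hSisym : Siᵀ = Si := by
    rw [hSi, Matrix.transpose_nonsing_inv, hSsym]
  have hA1T : A1ᵀ = Si * K := by rw [hA1, Matrix.transpose_mul, hSisym, hKsym]
  have hA2T : A2ᵀ = Si * Sεδᵀ := by rw [hA2, Matrix.transpose_mul, hSisym]
  -- γ covariances
  have hγ₁Y : ∀ {p : ℕ} (Y : Ω → Fin p → ℝ), L2V P Y →
      vcov P γ₁ Y = vcov P ξ Y - A1 * vcov P x Y := by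
    intro p Y hY
    nth_rewrite 1 [hγ₁f]
    exact vcov_resid_left P hL2ξ hL2x hY c1 A1
  have hγ₂Y : ∀ {p : ℕ} (Y : Ω → Fin p → ℝ), L2V P Y →
      vcov P γ₂ Y = vcov P ε Y - A2 * vcov P x Y := by
    intro p Y hY
    nth_rewrite 1 [hγ₂f]
    exact vcov_resid_left P hL2ε hL2x hY c2 A2
  have hYγ₁ : ∀ {p : ℕ} (Y : Ω → Fin p → ℝ), L2V P Y →
      vcov P Y γ₁ = vcov P Y ξ - vcov P Y x * A1ᵀ := by
    intro p Y hY
    nth_rewrite 1 [hγ₁f]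
    exact vcov_resid_right P hL2ξ hL2x hY c1 A1
  have hYγ₂ : ∀ {p : ℕ} (Y : Ω → Fin p → ℝ), L2V P Y →
      vcov P Y γ₂ = vcov P Y ε - vcov P Y x * A2ᵀ := by
    intro p Y hY
    nth_rewrite 1 [hγ₂f]
    exact vcov_resid_right P hL2ε hL2x hY c2 A2
  have hG11 : vcov P γ₁ γ₁ = K - K * (Si * K) := by
    rw [hγ₁Y γ₁ hL2γ₁, hYγ₁ ξ hL2ξ, hYγ₁ x hL2x, hvξx, hvxξ, hA1T, hA1]
    rw [Matrix.mul_sub, Matrix.mul_assoc K Si K]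
    rw [show vcov P ξ ξ = K from rfl]
    rw [Matrix.mul_assoc K Si (vcov P x x * (Si * K)), hSi,
      Matrix.mul_nonsing_inv_cancel_left _ _ hunit]
    abel
  have hG12 : vcov P γ₁ γ₂ = -(K * (Si * Sεδᵀ)) := by
    rw [hγ₁Y γ₂ hL2γ₂, hYγ₂ ξ hL2ξ, hYγ₂ x hL2x, hvξε, hvξx, hvxε, hA2T, hA1]
    rw [Matrix.mul_sub, Matrix.mul_assoc K Si Sεδᵀ,
      Matrix.mul_assoc K Si (vcov P x x * (Si * Sεδᵀ)), hSi,
      Matrix.mul_nonsing_inv_cancel_left _ _ hunit]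
    abel
  have hG22 : vcov P γ₂ γ₂ = E - Sεδ * (Si * Sεδᵀ) := by
    rw [hγ₂Y γ₂ hL2γ₂, hYγ₂ ε hL2ε, hYγ₂ x hL2x, hvεx, hvxε, hA2T, hA2]
    rw [Matrix.mul_sub, Matrix.mul_assoc Sεδ Si Sεδᵀ,
      Matrix.mul_assoc Sεδ Si (vcov P x x * (Si * Sεδᵀ)), hSi,
      Matrix.mul_nonsing_inv_cancel_left _ _ hunit, hE]
    abel
  have hG21 : vcov P γ₂ γ₁ = -(Sεδ * (Si * K)) := by
    rw [vcov_comm' P γ₂ γ₁, hG12, Matrix.transpose_neg, Matrix.transpose_mul,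
      Matrix.transpose_mul, Matrix.transpose_transpose, hSisym, hKsym,
      Matrix.mul_assoc]
  -- cross covariance with e is zero
  have hveγ₁ : vcov P e γ₁ = 0 := by
    rw [hYγ₁ e hL2e, hveξ, hvex, Matrix.zero_mul, sub_zero]
  have hveγ₂ : vcov P e γ₂ = 0 := by
    rw [hYγ₂ e hL2e, hveε, hvex, Matrix.zero_mul, sub_zero]
  have hveg : vcov P e (fun ω => Bᵀ.mulVec (γ₁ ω) + γ₂ ω) = 0 := by
    rw [vcov_add_right P hL2e hL2Bγ₁ hL2γ₂, vcov_mulVec_right P Bᵀ hL2γ₁ hL2e,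
      hveγ₁, hveγ₂, Matrix.zero_mul, add_zero]
  have hvge : vcov P (fun ω => Bᵀ.mulVec (γ₁ ω) + γ₂ ω) e = 0 := by
    rw [vcov_comm' P _ e, hveg, Matrix.transpose_zero]
  -- the pointwise representation u = e + g
  have hug : u = fun ω => e ω + (Bᵀ.mulVec (γ₁ ω) + γ₂ ω) := by
    funext ω
    rw [hu ω, hy ω, hγ₁ ω, hγ₂ ω, hbx, hBx]
    simp only [hc1, hc2]
    simp only [Matrix.mulVec_add, Matrix.mulVec_sub, Matrix.add_mulVec,
      Matrix.sub_mulVec, Matrix.mulVec_mulVec, Matrix.mul_assoc]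
    abel
  -- part 1
  have part1 : vcov P u u = vcov P e e
      + vcov P (fun ω => Bᵀ.mulVec (γ₁ ω) + γ₂ ω) (fun ω => Bᵀ.mulVec (γ₁ ω) + γ₂ ω) := by
    rw [hug, vcov_add_left P hL2e hL2g (L2V_add P hL2e hL2g),
      vcov_add_right P hL2e hL2e hL2g, vcov_add_right P hL2g hL2e hL2g,
      hveg, hvge, add_zero, zero_add]
  refine ⟨part1, ?_⟩
  -- g covariance in block form
  have hvgg : vcov P (fun ω => Bᵀ.mulVec (γ₁ ω) + γ₂ ω) (fun ω => Bᵀ.mulVec (γ₁ ω) + γ₂ ω)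
      = Bᵀ * (vcov P γ₁ γ₁ * B) + Bᵀ * vcov P γ₁ γ₂
        + (vcov P γ₂ γ₁ * B + vcov P γ₂ γ₂) := by
    rw [vcov_add_left P hL2Bγ₁ hL2γ₂ hL2g,
      vcov_mulVec_left P Bᵀ hL2γ₁ hL2g,
      vcov_add_right P hL2γ₁ hL2Bγ₁ hL2γ₂,
      vcov_add_right P hL2γ₂ hL2Bγ₁ hL2γ₂,
      vcov_mulVec_right P Bᵀ hL2γ₁ hL2γ₁,
      vcov_mulVec_right P Bᵀ hL2γ₁ hL2γ₂,
      Matrix.transpose_transpose, Matrix.mul_add]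
  -- V in block form
  have hVblocks : V = Matrix.fromBlocks (vcov P γ₁ γ₁) (vcov P γ₁ γ₂)
      (vcov P γ₂ γ₁) (vcov P γ₂ γ₂) := by
    rw [hV, Matrix.transpose_fromRows, Matrix.fromRows_mul,
      Matrix.fromRows_mul_fromCols, fromBlocks_sub', hG11, hG12, hG21, hG22,
      hKsym, Matrix.mul_assoc K Si K, Matrix.mul_assoc K Si Sεδᵀ,
      Matrix.mul_assoc Sεδ Si K, Matrix.mul_assoc Sεδ Si Sεδᵀ, zero_sub, zero_sub,
      hK, hE]
  -- quadratic form identity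
  have hquad : ∀ a : Fin d → ℝ,
      a ⬝ᵥ (vcov P (fun ω => Bᵀ.mulVec (γ₁ ω) + γ₂ ω)
          (fun ω => Bᵀ.mulVec (γ₁ ω) + γ₂ ω)).mulVec a
        = (Sum.elim (B.mulVec a) a) ⬝ᵥ V.mulVec (Sum.elim (B.mulVec a) a) := by
    intro a
    rw [hvgg, hVblocks, Matrix.fromBlocks_mulVec, Sum.elim_comp_inl, Sum.elim_comp_inr,
      sumElim_dotProduct_sumElim]
    simp only [Matrix.add_mulVec, dotProduct_add, ← Matrix.mulVec_mulVec,
      Matrix.dotProduct_mulVec, Matrix.vecMul_transpose]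
  intro hcase
  rcases hcase with hPD | hPD
  · rw [part1]
    exact hPD.add_posSemidef (vcov_posSemidef P hL2g)
  · have hgPD : (vcov P (fun ω => Bᵀ.mulVec (γ₁ ω) + γ₂ ω)
        (fun ω => Bᵀ.mulVec (γ₁ ω) + γ₂ ω)).PosDef := by
      refine posDef_iff_dotProduct_mulVec.mpr ⟨vcov_self_isHermitian P _, fun a ha => ?_⟩
      have hsa : star a = a := by funext i; simp
      rw [hsa, hquad a]
      have hw : (Sum.elim (B.mulVec a) a : Fin m ⊕ Fin d → ℝ) ≠ 0 := by
        intro hcontra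
        exact ha (funext fun i => by simpa using congrFun hcontra (Sum.inr i))
      have := (posDef_iff_dotProduct_mulVec.mp hPD).2 hw
      rwa [show star (Sum.elim (B.mulVec a) a : Fin m ⊕ Fin d → ℝ)
          = Sum.elim (B.mulVec a) a from funext fun s => by simp] at this
    rw [part1]
    exact Matrix.PosDef.posSemidef_add (vcov_posSemidef P hL2e) hgPD
end
end

section
/- In the univariate linear EIV model with σ_ξ² = 0 (so ξ = μ a.s.), σ_ε² > 0, σ_δ² > 0, and |Corr(ε, δ)| < 1, the error u in the representation y = b_x + c^T z + β_x x + u equals e + ε − σ_{εδ} σ_δ^{-2} δ almost surely, and its variance σ_u² = σ_e² + σ_ε² − σ_{εδ}² σ_δ^{-2} is strictly positive. -/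
open MeasureTheory ProbabilityTheory
open scoped NNReal

noncomputable section

open scoped ENNReal

lemma aux_variance_congr {Ω : Type*} [MeasurableSpace Ω] {P : Measure Ω} {X Y : Ω → ℝ}
    (h : X =ᵐ[P] Y) : ProbabilityTheory.variance X P = ProbabilityTheory.variance Y P := by
  unfold ProbabilityTheory.variance ProbabilityTheory.evariance
  rw [integral_congr_ae h]
  congr 1
  apply lintegral_congr_ae
  filter_upwards [h] with ω hω
  rw [hω]

/-- In the univariate linear EIV model `y = b + cᵀ z + β ξ + e + ε`,
`x = ξ + δ`, with `σξ² = 0` (so `ξ = μ` a.s.), `σε² > 0`, `σδ² > 0`, `|Corr(ε,δ)| < 1`,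
the error `u` of the representation `y = bₓ + cᵀ z + βₓ x + u` equals
`e + ε − σεδ σδ⁻² δ` almost surely, and its variance
`σᵤ² = σe² + σε² − σεδ² σδ⁻²` is strictly positive. -/
theorem stmt6 {Ω : Type*} [MeasurableSpace Ω] (P : Measure Ω) [IsProbabilityMeasure P]
    {q : ℕ} (y e ε ξ δ x : Ω → ℝ) (z : Ω → Fin q → ℝ)
    (hym : Measurable y) (hzm : Measurable z) (hξm : Measurable ξ)
    (hδm : Measurable δ) (hem : Measurable e) (hεm : Measurable ε)
    (b β : ℝ) (c : Fin q → ℝ)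
    (hy : ∀ ω, y ω = b + (∑ i, c i * z ω i) + β * ξ ω + e ω + ε ω)
    (hx : ∀ ω, x ω = ξ ω + δ ω)
    -- (i) independence and second moments
    (hindep₁ : ProbabilityTheory.IndepFun z (fun ω => (ξ ω, e ω, ε ω, δ ω)) P)
    (hindep₂ : ProbabilityTheory.IndepFun ξ (fun ω => (e ω, ε ω, δ ω)) P)
    (hindep₃ : ProbabilityTheory.IndepFun e (fun ω => (ε ω, δ ω)) P)
    (hL2z : ∀ i, MeasureTheory.MemLp (fun ω => z ω i) 2 P)
    (hL2e : MeasureTheory.MemLp e 2 P)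
    -- (iii) zero means
    (he0 : ∫ ω, e ω ∂P = 0) (hε0 : ∫ ω, ε ω ∂P = 0) (hδ0 : ∫ ω, δ ω ∂P = 0)
    -- (iv) ε, δ, ξ jointly Gaussian, with ξ degenerate at μ (σξ² = 0)
    (hGauss : IsGaussianVec P (fun ω => ![ε ω, δ ω, ξ ω]))
    (μ : ℝ) (hξconst : ∀ᵐ ω ∂P, ξ ω = μ) (hvarξ : ProbabilityTheory.variance ξ P = 0)
    (σε2 σδ2 σεδ : ℝ)
    (hσε2 : σε2 = ProbabilityTheory.variance ε P) (hσε2pos : 0 < σε2)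
    (hσδ2 : σδ2 = ProbabilityTheory.variance δ P) (hσδ2pos : 0 < σδ2)
    (hσεδ : σεδ = ∫ ω, ε ω * δ ω ∂P)
    (hcorr : σεδ ^ 2 < σε2 * σδ2)
    -- the representation error, with σξ² = 0, σx² = σδ²:
    -- bₓ = b + β μ − σεδ μ / σδ², βₓ = σεδ / σδ²
    (u : Ω → ℝ)
    (hu : ∀ ω, u ω = y ω - ((b + β * μ - σεδ * μ / σδ2)
        + (∑ i, c i * z ω i) + (σεδ / σδ2) * x ω)) :
    (∀ᵐ ω ∂P, u ω = e ω + ε ω - σεδ / σδ2 * δ ω)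
      ∧ ProbabilityTheory.variance u P
          = ProbabilityTheory.variance e P + σε2 - σεδ ^ 2 / σδ2
      ∧ 0 < ProbabilityTheory.variance u P := by
  have hδ2ne : σδ2 ≠ 0 := ne_of_gt hσδ2pos
  set k : ℝ := σεδ / σδ2 with hk
  -- a.e. representation of u
  have hae : ∀ᵐ ω ∂P, u ω = e ω + ε ω - k * δ ω := by
    filter_upwards [hξconst] with ω hω
    rw [hu, hy, hx, hω, hk]
    field_simp
    ring
  -- Memℒp facts for ε and δ from positive (hence finite) variance
  have hMε : MemLp ε 2 P := by
    by_contra h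
    have h2 : ProbabilityTheory.variance ε P = 0 := by
      simp [ProbabilityTheory.variance,
        ProbabilityTheory.evariance_eq_top hεm.aestronglyMeasurable h]
    rw [hσε2, h2] at hσε2pos
    exact lt_irrefl 0 hσε2pos
  have hMδ : MemLp δ 2 P := by
    by_contra h
    have h2 : ProbabilityTheory.variance δ P = 0 := by
      simp [ProbabilityTheory.variance,
        ProbabilityTheory.evariance_eq_top hδm.aestronglyMeasurable h]
    rw [hσδ2, h2] at hσδ2pos
    exact lt_irrefl 0 hσδ2pos
  set Y : Ω → ℝ := fun ω => ε ω - k * δ ω with hY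
  have hMY : MemLp Y 2 P := hMε.sub (hMδ.const_mul k)
  -- integrability facts
  have hIε : Integrable ε P := hMε.integrable one_le_two
  have hIδ : Integrable δ P := hMδ.integrable one_le_two
  have hIε2 : Integrable (fun ω => ε ω ^ 2) P := hMε.integrable_sq
  have hIδ2 : Integrable (fun ω => δ ω ^ 2) P := hMδ.integrable_sq
  have hIεδ : Integrable (fun ω => ε ω * δ ω) P := by
    have h12 : (1 : ℝ≥0∞) / 1 = 1 / 2 + 1 / 2 := by
      rw [ENNReal.div_add_div_same, one_div_one, one_add_one_eq_two]
      exact (ENNReal.div_self two_ne_zero ENNReal.ofNat_ne_top).symm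
    have : MemLp (ε • δ) (1 : ℝ≥0∞) P := hMδ.smul hMε
    rw [memLp_one_iff_integrable] at this
    exact this
  -- variance of u via the a.e. representation
  have haeW : u =ᵐ[P] (e + Y) := by
    filter_upwards [hae] with ω hω
    simp only [Pi.add_apply, hY]
    rw [hω]; ring
  have hvarU : ProbabilityTheory.variance u P
      = ProbabilityTheory.variance (e + Y) P := aux_variance_congr haeW
  -- independence of e and Y
  have hiY : ProbabilityTheory.IndepFun e Y P := by
    have := hindep₃.comp measurable_id
      ((measurable_fst.sub (measurable_snd.const_mul k)) :
        Measurable fun p : ℝ × ℝ => p.1 - k * p.2)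
    exact this
  have hvarAdd : ProbabilityTheory.variance (e + Y) P
      = ProbabilityTheory.variance e P + ProbabilityTheory.variance Y P :=
    hiY.variance_add hL2e hMY
  -- compute variance of Y
  have hIkδ : Integrable (fun ω => k * δ ω) P := hIδ.const_mul k
  have hEY : ∫ ω, Y ω ∂P = 0 := by
    rw [hY]
    rw [integral_sub hIε hIkδ, integral_const_mul, hε0, hδ0]
    ring
  have hEε2 : ∫ ω, ε ω ^ 2 ∂P = σε2 := by
    have := ProbabilityTheory.variance_eq_sub hMε
    simp only [Pi.pow_apply] at this
    rw [hσε2, this, hε0]; ring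
  have hEδ2 : ∫ ω, δ ω ^ 2 ∂P = σδ2 := by
    have := ProbabilityTheory.variance_eq_sub hMδ
    simp only [Pi.pow_apply] at this
    rw [hσδ2, this, hδ0]; ring
  have hEY2 : ∫ ω, Y ω ^ 2 ∂P = σε2 - 2 * k * σεδ + k ^ 2 * σδ2 := by
    have hrw : ∀ ω, Y ω ^ 2
        = (ε ω ^ 2 - (2 * k) * (ε ω * δ ω)) + k ^ 2 * δ ω ^ 2 := by
      intro ω; rw [hY]; ring
    calc ∫ ω, Y ω ^ 2 ∂P
        = ∫ ω, ((ε ω ^ 2 - (2 * k) * (ε ω * δ ω)) + k ^ 2 * δ ω ^ 2) ∂P := by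
          exact integral_congr_ae (Filter.Eventually.of_forall hrw)
      _ = (∫ ω, (ε ω ^ 2 - (2 * k) * (ε ω * δ ω)) ∂P) + ∫ ω, k ^ 2 * δ ω ^ 2 ∂P := by
          exact integral_add (hIε2.sub (hIεδ.const_mul _)) (hIδ2.const_mul _)
      _ = (∫ ω, ε ω ^ 2 ∂P) - (2 * k) * (∫ ω, ε ω * δ ω ∂P)
            + k ^ 2 * ∫ ω, δ ω ^ 2 ∂P := by
          rw [integral_sub hIε2 (hIεδ.const_mul _), integral_const_mul, integral_const_mul]
      _ = σε2 - 2 * k * σεδ + k ^ 2 * σδ2 := by rw [hEε2, hEδ2, ← hσεδ]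
  have hvarY : ProbabilityTheory.variance Y P = σε2 - σεδ ^ 2 / σδ2 := by
    have := ProbabilityTheory.variance_eq_sub hMY
    simp only [Pi.pow_apply] at this
    rw [this, hEY, hEY2, hk]
    field_simp
    ring
  have hvar : ProbabilityTheory.variance u P
      = ProbabilityTheory.variance e P + σε2 - σεδ ^ 2 / σδ2 := by
    rw [hvarU, hvarAdd, hvarY]; ring
  refine ⟨hae, hvar, ?_⟩
  rw [hvar]
  have h1 : σεδ ^ 2 / σδ2 < σε2 := (div_lt_iff₀ hσδ2pos).2 hcorr
  have h2 : 0 ≤ ProbabilityTheory.variance e P := ProbabilityTheory.variance_nonneg e P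
  linarith
end
end

section
/- In the multivariate linear EIV model under assumptions (i)-(iv), the OLS estimators (Ĉ, B̂_x) = S_{rr}^{+} S_{ry} with r = (z^T, x^T)^T converge almost surely, as n → ∞, to (C, B_x), where B_x^T = B^T Σ_ξ Σ_x^{-1} + Σ_{εδ} Σ_x^{-1}; consequently the OLS predictor ỹ_0 = b̂_x + Ĉ^T z_0 + B̂_x^T x_0 converges almost surely to the best predictor ŷ_0 = b_x + C^T z_0 + B_x^T x_0. -/
set_option linter.unusedSectionVars false


open MeasureTheory ProbabilityTheory Matrix Filter
open scoped NNReal Topology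

noncomputable section
open Classical

/-- Moore–Penrose pseudoinverse of a real square matrix. -/
def moorePenrose {p : ℕ} (A : Matrix (Fin p) (Fin p) ℝ) : Matrix (Fin p) (Fin p) ℝ :=
  if h : ∃ B : Matrix (Fin p) (Fin p) ℝ,
      A * B * A = A ∧ B * A * B = B ∧ (A * B)ᵀ = A * B ∧ (B * A)ᵀ = B * A
  then h.choose else 0

section Helpers

variable {Ω : Type*} [MeasurableSpace Ω] {P : Measure Ω} [IsProbabilityMeasure P]

/-- Covariance of two real random variables. -/
def cov2 (P : Measure Ω) (f g : Ω → ℝ) : ℝ :=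
  (∫ ω, f ω * g ω ∂P) - (∫ ω, f ω ∂P) * (∫ ω, g ω ∂P)

lemma L2.int_mul {f g : Ω → ℝ} (hf : MemLp f 2 P) (hg : MemLp g 2 P) :
    Integrable (fun ω => f ω * g ω) P := by
  have h := hg.smul (p := 2) (q := 2) (r := 1) hf
  rw [← memLp_one_iff_integrable]
  exact h

lemma cov2_comm (f g : Ω → ℝ) : cov2 P f g = cov2 P g f := by
  unfold cov2
  simp_rw [mul_comm]

lemma cov2_add_right {f g h : Ω → ℝ} (hf : MemLp f 2 P) (hg : MemLp g 2 P)
    (hh : MemLp h 2 P) :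
    cov2 P f (fun ω => g ω + h ω) = cov2 P f g + cov2 P f h := by
  unfold cov2
  have hfg := L2.int_mul hf hg
  have hfh := L2.int_mul hf hh
  have hg1 := hg.integrable one_le_two
  have hh1 := hh.integrable one_le_two
  have h1 : (∫ ω, f ω * (g ω + h ω) ∂P)
      = (∫ ω, f ω * g ω ∂P) + ∫ ω, f ω * h ω ∂P := by
    rw [← integral_add hfg hfh]
    congr 1; funext ω; ring
  rw [h1, integral_add hg1 hh1]; ring

lemma cov2_const_right (f : Ω → ℝ) (c : ℝ) : cov2 P f (fun _ => c) = 0 := by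
  unfold cov2
  rw [integral_mul_const, integral_const]
  simp

lemma cov2_smul_right (f g : Ω → ℝ) (c : ℝ) :
    cov2 P f (fun ω => c * g ω) = c * cov2 P f g := by
  unfold cov2
  have h1 : (∫ ω, f ω * (c * g ω) ∂P) = c * ∫ ω, f ω * g ω ∂P := by
    rw [← integral_const_mul]
    congr 1; funext ω; ring
  rw [h1, integral_const_mul]; ring

lemma cov2_sum_right {ι : Type*} (s : Finset ι) {f : Ω → ℝ} (g : ι → Ω → ℝ)
    (hf : MemLp f 2 P) (hg : ∀ i, MemLp (g i) 2 P) :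
    cov2 P f (fun ω => ∑ i ∈ s, g i ω) = ∑ i ∈ s, cov2 P f (g i) := by
  induction s using Finset.cons_induction with
  | empty => simpa using cov2_const_right (P := P) f 0
  | cons a s ha ih =>
      have hs : MemLp (fun ω => ∑ i ∈ s, g i ω) 2 P :=
        memLp_finset_sum s fun i _ => hg i
      rw [Finset.sum_cons]
      have := cov2_add_right (P := P) hf (hg a) hs
      simp only [Finset.sum_cons]
      rw [show (fun ω => g a ω + ∑ i ∈ s, g i ω)
        = fun ω => g a ω + (fun ω => ∑ i ∈ s, g i ω) ω from rfl] at this ⊢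
      rw [this, ih]

lemma cov2_indep {f g : Ω → ℝ} (h : IndepFun f g P) (hf : Integrable f P)
    (hg : Integrable g P) : cov2 P f g = 0 := by
  unfold cov2
  rw [show (fun ω => f ω * g ω) = f * g from rfl, h.integral_mul_eq_mul_integral hf.1 hg.1]
  ring

lemma vcov_apply {n m : ℕ} {X : Ω → Fin n → ℝ} {Y : Ω → Fin m → ℝ}
    (hX : ∀ i, MemLp (fun ω => X ω i) 2 P) (hY : ∀ j, MemLp (fun ω => Y ω j) 2 P)
    (i : Fin n) (j : Fin m) :
    vcov P X Y i j = cov2 P (fun ω => X ω i) (fun ω => Y ω j) := by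
  have hXi := hX i
  have hYj := hY j
  have hXY := L2.int_mul hXi hYj
  have hX1 := hXi.integrable one_le_two
  have hY1 := hYj.integrable one_le_two
  set a := vmean P X i with ha
  set b := vmean P Y j with hb
  have key : (fun ω => (X ω i - a) * (Y ω j - b))
      = fun ω => X ω i * Y ω j - (a * Y ω j + (b * X ω i - a * b)) := by
    funext ω; ring
  unfold vcov cov2
  rw [Matrix.of_apply, key, integral_sub hXY, integral_add (hY1.const_mul a),
    integral_sub (hX1.const_mul b), integral_const_mul, integral_const_mul, integral_const]
  · simp only [smul_eq_mul, measure_univ, ENNReal.toReal_one, probReal_univ, one_mul]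
    have haa : (∫ ω, X ω i ∂P) = a := rfl
    have hbb : (∫ ω, Y ω j ∂P) = b := rfl
    rw [haa, hbb]; ring
  · exact integrable_const _
  · exact (hX1.const_mul b).sub (integrable_const _)
  · exact ((hY1.const_mul a).add ((hX1.const_mul b).sub (integrable_const _)))

lemma vcov_self_symm {n : ℕ} (X : Ω → Fin n → ℝ) : (vcov P X X)ᵀ = vcov P X X := by
  ext i j
  show vcov P X X j i = vcov P X X i j
  unfold vcov
  simp_rw [Matrix.of_apply, mul_comm]

lemma moorePenrose_of_det {p : ℕ} {A : Matrix (Fin p) (Fin p) ℝ} (h : A.det ≠ 0) :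
    moorePenrose A = A⁻¹ := by
  have hu : IsUnit A.det := isUnit_iff_ne_zero.mpr h
  have hex : ∃ B : Matrix (Fin p) (Fin p) ℝ,
      A * B * A = A ∧ B * A * B = B ∧ (A * B)ᵀ = A * B ∧ (B * A)ᵀ = B * A := by
    refine ⟨A⁻¹, ?_, ?_, ?_, ?_⟩ <;>
      simp [Matrix.mul_nonsing_inv A hu, Matrix.nonsing_inv_mul A hu]
  rw [moorePenrose, dif_pos hex]
  obtain ⟨h1, h2, h3, h4⟩ := hex.choose_spec
  calc hex.choose = (A⁻¹ * A) * hex.choose * (A * A⁻¹) := by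
        rw [Matrix.nonsing_inv_mul A hu, Matrix.mul_nonsing_inv A hu, Matrix.one_mul,
          Matrix.mul_one]
    _ = A⁻¹ * (A * hex.choose * A) * A⁻¹ := by simp only [Matrix.mul_assoc]
    _ = A⁻¹ * A * A⁻¹ := by rw [h1, Matrix.mul_assoc]
    _ = A⁻¹ := by rw [Matrix.nonsing_inv_mul A hu, Matrix.one_mul]

lemma sample_cov_identity {n : ℕ} (hn : 1 ≤ n) (a b : ℕ → ℝ) :
    (∑ i ∈ Finset.range n, (a i - (∑ i ∈ Finset.range n, a i) / n)
      * (b i - (∑ i ∈ Finset.range n, b i) / n)) / n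
    = (∑ i ∈ Finset.range n, a i * b i) / n
      - ((∑ i ∈ Finset.range n, a i) / n) * ((∑ i ∈ Finset.range n, b i) / n) := by
  have hn' : (n : ℝ) ≠ 0 := Nat.cast_ne_zero.mpr (by omega)
  set A := ∑ i ∈ Finset.range n, a i with hA
  set Bs := ∑ i ∈ Finset.range n, b i with hB
  have expand : (∑ i ∈ Finset.range n, (a i - A / n) * (b i - Bs / n))
      = (∑ i ∈ Finset.range n, a i * b i) - (Bs / n) * A - (A / n) * Bs
        + n * ((A / n) * (Bs / n)) := by
    have key : ∀ i, (a i - A / n) * (b i - Bs / n)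
        = a i * b i - (Bs / n) * a i - (A / n) * b i + (A / n) * (Bs / n) := by
      intro i; ring
    rw [Finset.sum_congr rfl fun i _ => key i]
    rw [Finset.sum_add_distrib, Finset.sum_sub_distrib, Finset.sum_sub_distrib,
      ← Finset.mul_sum, ← Finset.mul_sum, Finset.sum_const, Finset.card_range, nsmul_eq_mul,
      ← hA, ← hB]
  rw [expand]
  field_simp
  ring

lemma tendsto_matrix_iff {ι : Type*} {l : Filter ι} {mm n : ℕ}
    {f : ι → Matrix (Fin mm) (Fin n) ℝ} {A : Matrix (Fin mm) (Fin n) ℝ} :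
    Tendsto f l (𝓝 A) ↔ ∀ i j, Tendsto (fun k => f k i j) l (𝓝 (A i j)) := by
  exact tendsto_pi_nhds.trans (forall_congr' fun i => tendsto_pi_nhds)

lemma slln_comp {Ω : Type*} [MeasurableSpace Ω] (P : Measure Ω) [IsProbabilityMeasure P]
    {d q m : ℕ} (y : Ω → Fin d → ℝ) (z : Ω → Fin q → ℝ) (x : Ω → Fin m → ℝ)
    (hym : Measurable y) (hzm : Measurable z) (hxm : Measurable x)
    (ys : ℕ → Ω → Fin d → ℝ) (zs : ℕ → Ω → Fin q → ℝ) (xs : ℕ → Ω → Fin m → ℝ)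
    (hmeas : ∀ i, Measurable (fun ω => (ys i ω, zs i ω, xs i ω)))
    (hiid : ∀ i, Measure.map (fun ω => (ys i ω, zs i ω, xs i ω)) P
        = Measure.map (fun ω => (y ω, z ω, x ω)) P)
    (hindepSeq : ProbabilityTheory.iIndepFun
        (fun i ω => (ys i ω, zs i ω, xs i ω)) P)
    (g : (Fin d → ℝ) × (Fin q → ℝ) × (Fin m → ℝ) → ℝ) (hg : Measurable g)
    (hint : Integrable (fun ω => g (y ω, z ω, x ω)) P) :
    ∀ᵐ ω ∂P, Tendsto (fun n => (∑ i ∈ Finset.range n, g (ys i ω, zs i ω, xs i ω)) / (n : ℝ))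
      atTop (𝓝 (∫ ω, g (y ω, z ω, x ω) ∂P)) := by
  have hobs : Measurable fun ω => (y ω, z ω, x ω) := hym.prodMk (hzm.prodMk hxm)
  have hident0 : ∀ i, IdentDistrib (fun ω => g (ys i ω, zs i ω, xs i ω))
      (fun ω => g (y ω, z ω, x ω)) P P := fun i =>
    { aemeasurable_fst := (hg.comp (hmeas i)).aemeasurable
      aemeasurable_snd := (hg.comp hobs).aemeasurable
      map_eq := by
        show Measure.map (g ∘ fun ω => (ys i ω, zs i ω, xs i ω)) P
            = Measure.map (g ∘ fun ω => (y ω, z ω, x ω)) P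
        rw [← Measure.map_map hg (hmeas i), hiid i, Measure.map_map hg hobs] }
  have hident := fun i => (hident0 i).trans (hident0 0).symm
  have hint0 : Integrable (fun ω => g (ys 0 ω, zs 0 ω, xs 0 ω)) P :=
    (hident0 0).integrable_iff.mpr hint
  have hindep : Pairwise (Function.onFun (IndepFun · · P) fun i ω => g (ys i ω, zs i ω, xs i ω)) :=
    fun i j hij => (hindepSeq.indepFun hij).comp hg hg
  have h := strong_law_ae_real _ hint0 hindep hident
  filter_upwards [h] with ω hω
  have hEq : (∫ ω, g (ys 0 ω, zs 0 ω, xs 0 ω) ∂P) = ∫ ω, g (y ω, z ω, x ω) ∂P :=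
    (hident0 0).integral_eq
  simpa [hEq] using hω

end Helpers

set_option maxHeartbeats 1000000 in
/-- In the multivariate linear EIV model with i.i.d. copies
`(yᵢ, zᵢ, xᵢ)`, the OLS estimators `(Ĉ, B̂ₓ) = S_rr⁺ S_ry` (with `r = (zᵀ, xᵀ)ᵀ`)
converge a.s. to `(C, Bₓ)` with `Bₓᵀ = Bᵀ Σ_ξ Σₓ⁻¹ + Σ_{εδ} Σₓ⁻¹`, and hence the OLS
predictor `ỹ₀ = b̂ₓ + Ĉᵀ z₀ + B̂ₓᵀ x₀` converges a.s. to the best predictor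
`ŷ₀ = bₓ + Cᵀ z₀ + Bₓᵀ x₀`. -/
theorem stmt10 {Ω : Type*} [MeasurableSpace Ω] (P : Measure Ω) [IsProbabilityMeasure P]
    {d q m : ℕ}
    (y : Ω → Fin d → ℝ) (z : Ω → Fin q → ℝ) (ξ δ x : Ω → Fin m → ℝ)
    (e ε : Ω → Fin d → ℝ)
    (hym : Measurable y) (hzm : Measurable z) (hξm : Measurable ξ)
    (hδm : Measurable δ) (hem : Measurable e) (hεm : Measurable ε)
    (b : Fin d → ℝ) (C : Matrix (Fin q) (Fin d) ℝ) (B : Matrix (Fin m) (Fin d) ℝ)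
    (hy : ∀ ω, y ω = b + Cᵀ.mulVec (z ω) + Bᵀ.mulVec (ξ ω) + e ω + ε ω)
    (hx : ∀ ω, x ω = ξ ω + δ ω)
    -- assumptions (i)–(iv)
    (hindep₁ : ProbabilityTheory.IndepFun z (fun ω => (ξ ω, e ω, ε ω, δ ω)) P)
    (hindep₂ : ProbabilityTheory.IndepFun ξ (fun ω => (e ω, ε ω, δ ω)) P)
    (hindep₃ : ProbabilityTheory.IndepFun e (fun ω => (ε ω, δ ω)) P)
    (hL2z : ∀ i, MeasureTheory.MemLp (fun ω => z ω i) 2 P)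
    (hL2ξ : ∀ i, MeasureTheory.MemLp (fun ω => ξ ω i) 2 P)
    (hL2e : ∀ i, MeasureTheory.MemLp (fun ω => e ω i) 2 P)
    (hL2ε : ∀ i, MeasureTheory.MemLp (fun ω => ε ω i) 2 P)
    (hL2δ : ∀ i, MeasureTheory.MemLp (fun ω => δ ω i) 2 P)
    (hSz : (vcov P z z).det ≠ 0) (hSx : (vcov P x x).det ≠ 0)
    (he0 : vmean P e = 0) (hε0 : vmean P ε = 0) (hδ0 : vmean P δ = 0)
    (hGauss : IsGaussianVec P (fun ω => Fin.append (ε ω) (Fin.append (δ ω) (ξ ω))))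
    (μ : Fin m → ℝ) (hμ : μ = vmean P x)
    (Sεδ : Matrix (Fin d) (Fin m) ℝ) (hSεδ : ∀ i j, Sεδ i j = ∫ ω, ε ω i * δ ω j ∂P)
    (bx : Fin d → ℝ) (Bx : Matrix (Fin m) (Fin d) ℝ)
    (hbx : bx = b + (Bᵀ * vcov P δ δ * (vcov P x x)⁻¹).mulVec μ
        - (Sεδ * (vcov P x x)⁻¹).mulVec μ)
    (hBx : Bxᵀ = Bᵀ * vcov P ξ ξ * (vcov P x x)⁻¹ + Sεδ * (vcov P x x)⁻¹)
    -- i.i.d. copies of the observed triple (y, z, x)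
    (ys : ℕ → Ω → Fin d → ℝ) (zs : ℕ → Ω → Fin q → ℝ) (xs : ℕ → Ω → Fin m → ℝ)
    (hmeas : ∀ i, Measurable (fun ω => (ys i ω, zs i ω, xs i ω)))
    (hiid : ∀ i, Measure.map (fun ω => (ys i ω, zs i ω, xs i ω)) P
        = Measure.map (fun ω => (y ω, z ω, x ω)) P)
    (hindepSeq : ProbabilityTheory.iIndepFun
        (fun i ω => (ys i ω, zs i ω, xs i ω)) P)
    -- the combined regressor rᵢ = (zᵢᵀ, xᵢᵀ)ᵀ and the sample covariance matrices
    (r : ℕ → Ω → Fin (q + m) → ℝ) (hr : ∀ i ω, r i ω = Fin.append (zs i ω) (xs i ω))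
    (rbar : ℕ → Ω → Fin (q + m) → ℝ) (ybar : ℕ → Ω → Fin d → ℝ)
    (hrbar : ∀ n ω j, rbar n ω j = (∑ i ∈ Finset.range n, r i ω j) / n)
    (hybar : ∀ n ω j, ybar n ω j = (∑ i ∈ Finset.range n, ys i ω j) / n)
    (Srr : ℕ → Ω → Matrix (Fin (q + m)) (Fin (q + m)) ℝ)
    (Sry : ℕ → Ω → Matrix (Fin (q + m)) (Fin d) ℝ)
    (hSrr : ∀ n ω j l, Srr n ω j l
        = (∑ i ∈ Finset.range n, (r i ω j - rbar n ω j) * (r i ω l - rbar n ω l)) / n)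
    (hSry : ∀ n ω j l, Sry n ω j l
        = (∑ i ∈ Finset.range n, (r i ω j - rbar n ω j) * (ys i ω l - ybar n ω l)) / n)
    -- the OLS estimators (Ĉ; B̂ₓ) = S_rr⁺ S_ry and the intercept estimator b̂ₓ
    (Chat : ℕ → Ω → Matrix (Fin q) (Fin d) ℝ) (Bxhat : ℕ → Ω → Matrix (Fin m) (Fin d) ℝ)
    (hChat : ∀ n ω (i : Fin q) j,
        Chat n ω i j = (moorePenrose (Srr n ω) * Sry n ω) (Fin.castAdd m i) j)
    (hBxhat : ∀ n ω (i : Fin m) j,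
        Bxhat n ω i j = (moorePenrose (Srr n ω) * Sry n ω) (Fin.natAdd q i) j)
    (bxhat : ℕ → Ω → Fin d → ℝ)
    (hbxhat : ∀ n ω, bxhat n ω = ybar n ω
        - (Chat n ω)ᵀ.mulVec (fun i => rbar n ω (Fin.castAdd m i))
        - (Bxhat n ω)ᵀ.mulVec (fun i => rbar n ω (Fin.natAdd q i)))
    -- the new observation
    (z₀ : Fin q → ℝ) (x₀ : Fin m → ℝ) :
    (∀ᵐ ω ∂P, Tendsto (fun n => (Chat n ω, Bxhat n ω)) atTop (𝓝 (C, Bx)))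
      ∧ (∀ᵐ ω ∂P, Tendsto
          (fun n => bxhat n ω + (Chat n ω)ᵀ.mulVec z₀ + (Bxhat n ω)ᵀ.mulVec x₀)
          atTop (𝓝 (bx + Cᵀ.mulVec z₀ + Bxᵀ.mulVec x₀))) := by
  classical
  -- pointwise descriptions
  have hxc : ∀ ω a, x ω a = ξ ω a + δ ω a := fun ω a => by rw [hx]; rfl
  have hyl : ∀ ω l, y ω l = b l + ((∑ bb, C bb l * z ω bb) +
      ((∑ bb, B bb l * ξ ω bb) + (e ω l + ε ω l))) := by
    intro ω l
    rw [hy]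
    simp only [Pi.add_apply, Matrix.mulVec, dotProduct, Matrix.transpose_apply]
    ring
  -- measurability of x
  have hxm : Measurable x := by
    have hxe : x = fun ω => ξ ω + δ ω := funext hx
    rw [hxe]; exact hξm.add hδm
  -- L² facts
  have hL2x : ∀ a, MemLp (fun ω => x ω a) 2 P := fun a => by
    have hxe : (fun ω => x ω a) = fun ω => ξ ω a + δ ω a := funext fun ω => hxc ω a
    rw [hxe]; exact (hL2ξ a).add (hL2δ a)
  have hL2sz : ∀ l, MemLp (fun ω => ∑ bb, C bb l * z ω bb) 2 P := fun l =>
    memLp_finset_sum _ fun bb _ => (hL2z bb).const_mul _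
  have hL2sξ : ∀ l, MemLp (fun ω => ∑ bb, B bb l * ξ ω bb) 2 P := fun l =>
    memLp_finset_sum _ fun bb _ => (hL2ξ bb).const_mul _
  have hL2y : ∀ l, MemLp (fun ω => y ω l) 2 P := fun l => by
    have hye : (fun ω => y ω l) = fun ω => b l + ((∑ bb, C bb l * z ω bb) +
        ((∑ bb, B bb l * ξ ω bb) + (e ω l + ε ω l))) := funext fun ω => hyl ω l
    rw [hye]
    exact (memLp_const (b l)).add ((hL2sz l).add ((hL2sξ l).add ((hL2e l).add (hL2ε l))))
  -- the combined regressor at the population level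
  set w : Ω → Fin (q + m) → ℝ := fun ω => Fin.append (z ω) (x ω) with hwdef
  have hwz : ∀ ω a, w ω (Fin.castAdd m a) = z ω a := fun ω a => Fin.append_left _ _ a
  have hwx : ∀ ω a, w ω (Fin.natAdd q a) = x ω a := fun ω a => Fin.append_right _ _ a
  have hL2w : ∀ j, MemLp (fun ω => w ω j) 2 P := by
    intro j
    induction j using Fin.addCases with
    | left a => simp only [hwz]; exact hL2z a
    | right a => simp only [hwx]; exact hL2x a
  -- measurability of the coordinate functionals on the triple
  have hgRm : ∀ j : Fin (q + m), Measurable fun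
      p : (Fin d → ℝ) × (Fin q → ℝ) × (Fin m → ℝ) => Fin.append p.2.1 p.2.2 j := by
    intro j
    induction j using Fin.addCases with
    | left a =>
        simp only [Fin.append_left]
        exact (measurable_pi_apply a).comp (measurable_fst.comp measurable_snd)
    | right a =>
        simp only [Fin.append_right]
        exact (measurable_pi_apply a).comp (measurable_snd.comp measurable_snd)
  have hgYm : ∀ l : Fin d, Measurable fun
      p : (Fin d → ℝ) × (Fin q → ℝ) × (Fin m → ℝ) => p.1 l := fun l =>
    (measurable_pi_apply l).comp measurable_fst
  -- SLLN applications
  have H1 : ∀ᵐ ω ∂P, ∀ j, Tendsto (fun n => (∑ i ∈ Finset.range n, r i ω j) / (n : ℝ))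
      atTop (𝓝 (∫ ω, w ω j ∂P)) := by
    rw [ae_all_iff]
    intro j
    have h := slln_comp P y z x hym hzm hxm ys zs xs hmeas hiid hindepSeq
      (fun p => Fin.append p.2.1 p.2.2 j) (hgRm j) ((hL2w j).integrable one_le_two)
    filter_upwards [h] with ω hω
    simp only [hr]
    exact hω
  have H2 : ∀ᵐ ω ∂P, ∀ l, Tendsto (fun n => (∑ i ∈ Finset.range n, ys i ω l) / (n : ℝ))
      atTop (𝓝 (∫ ω, y ω l ∂P)) := by
    rw [ae_all_iff]
    intro l
    exact slln_comp P y z x hym hzm hxm ys zs xs hmeas hiid hindepSeq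
      (fun p => p.1 l) (hgYm l) ((hL2y l).integrable one_le_two)
  have H3 : ∀ᵐ ω ∂P, ∀ j l, Tendsto
      (fun n => (∑ i ∈ Finset.range n, r i ω j * r i ω l) / (n : ℝ))
      atTop (𝓝 (∫ ω, w ω j * w ω l ∂P)) := by
    rw [ae_all_iff]; intro j; rw [ae_all_iff]; intro l
    have h := slln_comp P y z x hym hzm hxm ys zs xs hmeas hiid hindepSeq
      (fun p => Fin.append p.2.1 p.2.2 j * Fin.append p.2.1 p.2.2 l)
      ((hgRm j).mul (hgRm l)) (L2.int_mul (hL2w j) (hL2w l))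
    filter_upwards [h] with ω hω
    simp only [hr]
    exact hω
  have H4 : ∀ᵐ ω ∂P, ∀ j l, Tendsto
      (fun n => (∑ i ∈ Finset.range n, r i ω j * ys i ω l) / (n : ℝ))
      atTop (𝓝 (∫ ω, w ω j * y ω l ∂P)) := by
    rw [ae_all_iff]; intro j; rw [ae_all_iff]; intro l
    have h := slln_comp P y z x hym hzm hxm ys zs xs hmeas hiid hindepSeq
      (fun p => Fin.append p.2.1 p.2.2 j * p.1 l)
      ((hgRm j).mul (hgYm l)) (L2.int_mul (hL2w j) (hL2y l))
    filter_upwards [h] with ω hω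
    simp only [hr]
    exact hω
  -- independence-based covariance computations
  have hIz := fun a => (hL2z a).integrable one_le_two
  have hIξ := fun a => (hL2ξ a).integrable one_le_two
  have hIδ := fun a => (hL2δ a).integrable one_le_two
  have hIe := fun l => (hL2e l).integrable one_le_two
  have hIε := fun l => (hL2ε l).integrable one_le_two
  have hIx := fun a => (hL2x a).integrable one_le_two
  have c_z : ∀ (a : Fin q) (g : (Fin m → ℝ) × (Fin d → ℝ) × (Fin d → ℝ) × (Fin m → ℝ) → ℝ),
      Measurable g → Integrable (fun ω => g (ξ ω, e ω, ε ω, δ ω)) P →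
      cov2 P (fun ω => z ω a) (fun ω => g (ξ ω, e ω, ε ω, δ ω)) = 0 := fun a g hgm hgi =>
    cov2_indep (hindep₁.comp (measurable_pi_apply a) hgm) (hIz a) hgi
  have c_ξ : ∀ (a : Fin m) (g : (Fin d → ℝ) × (Fin d → ℝ) × (Fin m → ℝ) → ℝ),
      Measurable g → Integrable (fun ω => g (e ω, ε ω, δ ω)) P →
      cov2 P (fun ω => ξ ω a) (fun ω => g (e ω, ε ω, δ ω)) = 0 := fun a g hgm hgi =>
    cov2_indep (hindep₂.comp (measurable_pi_apply a) hgm) (hIξ a) hgi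
  have c_e : ∀ (l : Fin d) (g : (Fin d → ℝ) × (Fin m → ℝ) → ℝ),
      Measurable g → Integrable (fun ω => g (ε ω, δ ω)) P →
      cov2 P (fun ω => e ω l) (fun ω => g (ε ω, δ ω)) = 0 := fun l g hgm hgi =>
    cov2_indep (hindep₃.comp (measurable_pi_apply l) hgm) (hIe l) hgi
  have c_zξ : ∀ a bb, cov2 P (fun ω => z ω a) (fun ω => ξ ω bb) = 0 := fun a bb =>
    c_z a (fun p => p.1 bb) ((measurable_pi_apply bb).comp measurable_fst) (hIξ bb)
  have c_ze : ∀ a l, cov2 P (fun ω => z ω a) (fun ω => e ω l) = 0 := fun a l =>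
    c_z a (fun p => p.2.1 l)
      ((measurable_pi_apply l).comp (measurable_fst.comp measurable_snd)) (hIe l)
  have c_zε : ∀ a l, cov2 P (fun ω => z ω a) (fun ω => ε ω l) = 0 := fun a l =>
    c_z a (fun p => p.2.2.1 l)
      ((measurable_pi_apply l).comp
        (measurable_fst.comp (measurable_snd.comp measurable_snd))) (hIε l)
  have c_zx : ∀ a bb, cov2 P (fun ω => z ω a) (fun ω => x ω bb) = 0 := fun a bb => by
    rw [show (fun ω => x ω bb) = fun ω => ξ ω bb + δ ω bb from funext fun ω => hxc ω bb]
    exact c_z a (fun p => p.1 bb + p.2.2.2 bb)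
      (((measurable_pi_apply bb).comp measurable_fst).add
        ((measurable_pi_apply bb).comp
          (measurable_snd.comp (measurable_snd.comp measurable_snd))))
      ((hIξ bb).add (hIδ bb))
  have c_ξe : ∀ a l, cov2 P (fun ω => ξ ω a) (fun ω => e ω l) = 0 := fun a l =>
    c_ξ a (fun p => p.1 l) ((measurable_pi_apply l).comp measurable_fst) (hIe l)
  have c_ξε : ∀ a l, cov2 P (fun ω => ξ ω a) (fun ω => ε ω l) = 0 := fun a l =>
    c_ξ a (fun p => p.2.1 l)
      ((measurable_pi_apply l).comp (measurable_fst.comp measurable_snd)) (hIε l)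
  have c_ξδ : ∀ a bb, cov2 P (fun ω => ξ ω a) (fun ω => δ ω bb) = 0 := fun a bb =>
    c_ξ a (fun p => p.2.2 bb)
      ((measurable_pi_apply bb).comp (measurable_snd.comp measurable_snd)) (hIδ bb)
  have c_eδ : ∀ l bb, cov2 P (fun ω => e ω l) (fun ω => δ ω bb) = 0 := fun l bb =>
    c_e l (fun p => p.2 bb) ((measurable_pi_apply bb).comp measurable_snd) (hIδ bb)
  have c_δε : ∀ a l, cov2 P (fun ω => δ ω a) (fun ω => ε ω l) = Sεδ l a := by
    intro a l
    unfold cov2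
    have h0 : (∫ ω, δ ω a ∂P) = 0 := by
      have := congrFun hδ0 a
      simpa [vmean] using this
    have h1 : (∫ ω, δ ω a * ε ω l ∂P) = ∫ ω, ε ω l * δ ω a ∂P := by simp_rw [mul_comm]
    rw [h0, h1, ← hSεδ]
    ring
  have cov2_x_split : ∀ (a : Fin m) (g : Ω → ℝ), MemLp g 2 P →
      cov2 P (fun ω => x ω a) g
        = cov2 P (fun ω => ξ ω a) g + cov2 P (fun ω => δ ω a) g := by
    intro a g hg
    rw [cov2_comm, show (fun ω => x ω a) = fun ω => ξ ω a + δ ω a from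
      funext fun ω => hxc ω a, cov2_add_right hg (hL2ξ a) (hL2δ a),
      cov2_comm g (fun ω => ξ ω a), cov2_comm g (fun ω => δ ω a)]
  have covY : ∀ (f : Ω → ℝ), MemLp f 2 P → ∀ l,
      cov2 P f (fun ω => y ω l)
        = (∑ bb, C bb l * cov2 P f (fun ω => z ω bb))
          + ((∑ bb, B bb l * cov2 P f (fun ω => ξ ω bb))
            + (cov2 P f (fun ω => e ω l) + cov2 P f (fun ω => ε ω l))) := by
    intro f hf l
    rw [show (fun ω => y ω l) = fun ω => b l + ((∑ bb, C bb l * z ω bb) +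
        ((∑ bb, B bb l * ξ ω bb) + (e ω l + ε ω l))) from funext fun ω => hyl ω l]
    have h45 : MemLp (fun ω => e ω l + ε ω l) 2 P := (hL2e l).add (hL2ε l)
    have h345 : MemLp (fun ω => (∑ bb, B bb l * ξ ω bb) + (e ω l + ε ω l)) 2 P :=
      (hL2sξ l).add h45
    have h2345 : MemLp (fun ω => (∑ bb, C bb l * z ω bb) +
        ((∑ bb, B bb l * ξ ω bb) + (e ω l + ε ω l))) 2 P := (hL2sz l).add h345
    rw [cov2_add_right hf (memLp_const (b l)) h2345, cov2_const_right, zero_add]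
    rw [cov2_add_right hf (hL2sz l) h345]
    rw [cov2_add_right hf (hL2sξ l) h45]
    rw [cov2_add_right hf (hL2e l) (hL2ε l)]
    rw [cov2_sum_right Finset.univ (fun bb => fun ω => C bb l * z ω bb) hf
      (fun bb => (hL2z bb).const_mul _)]
    rw [cov2_sum_right Finset.univ (fun bb => fun ω => B bb l * ξ ω bb) hf
      (fun bb => (hL2ξ bb).const_mul _)]
    simp only [cov2_smul_right]
  have hvzz : ∀ a bb, vcov P z z a bb = cov2 P (fun ω => z ω a) (fun ω => z ω bb) :=
    fun a bb => vcov_apply hL2z hL2z a bb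
  have hvξξ : ∀ a bb, vcov P ξ ξ a bb = cov2 P (fun ω => ξ ω a) (fun ω => ξ ω bb) :=
    fun a bb => vcov_apply hL2ξ hL2ξ a bb
  have covZY : ∀ a l, cov2 P (fun ω => z ω a) (fun ω => y ω l)
      = ∑ bb, vcov P z z a bb * C bb l := by
    intro a l
    rw [covY _ (hL2z a) l]
    simp only [c_zξ, c_ze, c_zε, mul_zero, Finset.sum_const_zero, add_zero]
    exact Finset.sum_congr rfl fun bb _ => by rw [hvzz a bb]; ring
  have covXY : ∀ a l, cov2 P (fun ω => x ω a) (fun ω => y ω l)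
      = (∑ bb, vcov P ξ ξ a bb * B bb l) + Sεδ l a := by
    intro a l
    rw [covY _ (hL2x a) l]
    have t1 : ∀ bb, cov2 P (fun ω => x ω a) (fun ω => z ω bb) = 0 := fun bb => by
      rw [cov2_comm]; exact c_zx bb a
    have t2 : ∀ bb, cov2 P (fun ω => x ω a) (fun ω => ξ ω bb) = vcov P ξ ξ a bb := by
      intro bb
      rw [cov2_x_split a _ (hL2ξ bb),
        show cov2 P (fun ω => δ ω a) (fun ω => ξ ω bb) = 0 from by
          rw [cov2_comm]; exact c_ξδ bb a,
        add_zero, hvξξ a bb]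
    have t3 : cov2 P (fun ω => x ω a) (fun ω => e ω l) = 0 := by
      rw [cov2_x_split a _ (hL2e l), c_ξe a l,
        show cov2 P (fun ω => δ ω a) (fun ω => e ω l) = 0 from by
          rw [cov2_comm]; exact c_eδ l a]
      ring
    have t4 : cov2 P (fun ω => x ω a) (fun ω => ε ω l) = Sεδ l a := by
      rw [cov2_x_split a _ (hL2ε l), c_ξε a l, c_δε a l, zero_add]
    simp only [t1, mul_zero, Finset.sum_const_zero, zero_add, t2, t3, t4]
    congr 1
    exact Finset.sum_congr rfl fun bb _ => mul_comm _ _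
  have hvxx : ∀ a bb, vcov P x x a bb = vcov P ξ ξ a bb + vcov P δ δ a bb := by
    intro a bb
    rw [vcov_apply hL2x hL2x a bb, cov2_x_split a _ (hL2x bb)]
    have s1 : cov2 P (fun ω => ξ ω a) (fun ω => x ω bb) = vcov P ξ ξ a bb := by
      rw [cov2_comm, cov2_x_split bb _ (hL2ξ a),
        show cov2 P (fun ω => δ ω bb) (fun ω => ξ ω a) = 0 from by
          rw [cov2_comm]; exact c_ξδ a bb,
        add_zero, cov2_comm (fun ω => ξ ω bb) (fun ω => ξ ω a), hvξξ a bb]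
    have s2 : cov2 P (fun ω => δ ω a) (fun ω => x ω bb) = vcov P δ δ a bb := by
      rw [cov2_comm, cov2_x_split bb _ (hL2δ a), c_ξδ bb a, zero_add,
        cov2_comm (fun ω => δ ω bb) (fun ω => δ ω a), vcov_apply hL2δ hL2δ a bb]
    rw [s1, s2]
  -- population matrices
  set Sw : Matrix (Fin (q + m)) (Fin (q + m)) ℝ := vcov P w w with hSwdef
  set T : Matrix (Fin (q + m)) (Fin d) ℝ := vcov P w y with hTdef
  set M : Matrix (Fin (q + m)) (Fin d) ℝ :=
    Matrix.of fun j l => Fin.addCases (fun a => C a l) (fun a => Bx a l) j with hMdef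
  have hMtop : ∀ a l, M (Fin.castAdd m a) l = C a l := fun a l => by simp [hMdef]
  have hMbot : ∀ a l, M (Fin.natAdd q a) l = Bx a l := fun a l => by simp [hMdef]
  have hwzfun : ∀ a : Fin q, (fun ω => w ω (Fin.castAdd m a)) = fun ω => z ω a :=
    fun a => funext fun ω => hwz ω a
  have hwxfun : ∀ a : Fin m, (fun ω => w ω (Fin.natAdd q a)) = fun ω => x ω a :=
    fun a => funext fun ω => hwx ω a
  have hStop : ∀ a bb, Sw (Fin.castAdd m a) (Fin.castAdd m bb) = vcov P z z a bb := by
    intro a bb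
    rw [hSwdef, vcov_apply hL2w hL2w, hwzfun a, hwzfun bb, hvzz a bb]
  have hScross1 : ∀ a bb, Sw (Fin.castAdd m a) (Fin.natAdd q bb) = 0 := by
    intro a bb
    rw [hSwdef, vcov_apply hL2w hL2w, hwzfun a, hwxfun bb]
    exact c_zx a bb
  have hScross2 : ∀ a bb, Sw (Fin.natAdd q a) (Fin.castAdd m bb) = 0 := by
    intro a bb
    rw [hSwdef, vcov_apply hL2w hL2w, hwxfun a, hwzfun bb, cov2_comm]
    exact c_zx bb a
  have hSbot : ∀ a bb, Sw (Fin.natAdd q a) (Fin.natAdd q bb) = vcov P x x a bb := by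
    intro a bb
    rw [hSwdef, vcov_apply hL2w hL2w, hwxfun a, hwxfun bb, vcov_apply hL2x hL2x]
  have hTtop : ∀ a l, T (Fin.castAdd m a) l = ∑ bb, vcov P z z a bb * C bb l := by
    intro a l
    rw [hTdef, vcov_apply hL2w hL2y, hwzfun a]
    exact covZY a l
  have hTbot : ∀ a l, T (Fin.natAdd q a) l
      = (∑ bb, vcov P ξ ξ a bb * B bb l) + Sεδ l a := by
    intro a l
    rw [hTdef, vcov_apply hL2w hL2y, hwxfun a]
    exact covXY a l
  have hdetSw : Sw.det ≠ 0 := by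
    have hsub : Sw = (Matrix.fromBlocks (vcov P z z) 0 0 (vcov P x x)).submatrix
        finSumFinEquiv.symm finSumFinEquiv.symm := by
      ext j l
      induction j using Fin.addCases with
      | left a =>
          induction l using Fin.addCases with
          | left bb =>
              rw [hStop a bb]
              simp [Matrix.submatrix_apply, finSumFinEquiv_symm_apply_castAdd]
          | right bb =>
              rw [hScross1 a bb]
              simp [Matrix.submatrix_apply, finSumFinEquiv_symm_apply_castAdd,
                finSumFinEquiv_symm_apply_natAdd]
      | right a =>
          induction l using Fin.addCases with
          | left bb =>
              rw [hScross2 a bb]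
              simp [Matrix.submatrix_apply, finSumFinEquiv_symm_apply_castAdd,
                finSumFinEquiv_symm_apply_natAdd]
          | right bb =>
              rw [hSbot a bb]
              simp [Matrix.submatrix_apply, finSumFinEquiv_symm_apply_natAdd]
    rw [hsub, Matrix.det_submatrix_equiv_self, Matrix.det_fromBlocks_zero₂₁]
    exact mul_ne_zero hSz hSx
  -- Σx * Bx = Σξ * B + Sεδᵀ
  have hSxU : IsUnit (vcov P x x).det := isUnit_iff_ne_zero.mpr hSx
  have hSxBx : vcov P x x * Bx = vcov P ξ ξ * B + Sεδᵀ := by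
    have hsymx : (vcov P x x)ᵀ = vcov P x x := vcov_self_symm x
    have hsymξ : (vcov P ξ ξ)ᵀ = vcov P ξ ξ := vcov_self_symm ξ
    have hBx2 : Bx = (vcov P x x)⁻¹ * (vcov P ξ ξ * B + Sεδᵀ) := by
      have h := congrArg Matrix.transpose hBx
      rw [Matrix.transpose_transpose, Matrix.transpose_add, Matrix.transpose_mul,
        Matrix.transpose_mul, Matrix.transpose_mul, Matrix.transpose_transpose,
        Matrix.transpose_nonsing_inv, hsymx, hsymξ] at h
      rw [h, Matrix.mul_add, ← Matrix.mul_assoc]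
    rw [hBx2, ← Matrix.mul_assoc, Matrix.mul_nonsing_inv _ hSxU, Matrix.one_mul]
  have hSwM : Sw * M = T := by
    ext j l
    rw [Matrix.mul_apply]
    induction j using Fin.addCases with
    | left a =>
        rw [Fin.sum_univ_add (f := fun k => Sw (Fin.castAdd m a) k * M k l)]
        simp only [hMtop, hMbot, hScross1, zero_mul, Finset.sum_const_zero, add_zero,
          hStop]
        rw [hTtop a l]
    | right a =>
        rw [Fin.sum_univ_add (f := fun k => Sw (Fin.natAdd q a) k * M k l)]
        simp only [hMtop, hMbot, hScross2, zero_mul, Finset.sum_const_zero, zero_add,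
          hSbot]
        rw [hTbot a l]
        have := congrArg (fun N => N a l) hSxBx
        simp only [Matrix.mul_apply, Matrix.add_apply, Matrix.transpose_apply] at this
        exact this
  have hkey : Sw⁻¹ * T = M := by
    rw [← hSwM, ← Matrix.mul_assoc,
      Matrix.nonsing_inv_mul _ (isUnit_iff_ne_zero.mpr hdetSw), Matrix.one_mul]
  -- mean computations
  have hμξ : ∀ a, μ a = ∫ ω, ξ ω a ∂P := by
    intro a
    rw [hμ]
    show (∫ ω, x ω a ∂P) = _
    rw [show (fun ω => x ω a) = fun ω => ξ ω a + δ ω a from funext fun ω => hxc ω a,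
      integral_add (hIξ a) (hIδ a)]
    have h0 : (∫ ω, δ ω a ∂P) = 0 := by simpa [vmean] using congrFun hδ0 a
    rw [h0, add_zero]
  have hmeany : ∀ l, (∫ ω, y ω l ∂P)
      = b l + ((∑ a, C a l * ∫ ω, z ω a ∂P) + (∑ a, B a l * ∫ ω, ξ ω a ∂P)) := by
    intro l
    rw [show (fun ω => y ω l) = fun ω => b l + ((∑ bb, C bb l * z ω bb) +
        ((∑ bb, B bb l * ξ ω bb) + (e ω l + ε ω l))) from funext fun ω => hyl ω l]
    have i45 : Integrable (fun ω => e ω l + ε ω l) P := (hIe l).add (hIε l)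
    have isz : Integrable (fun ω => ∑ bb, C bb l * z ω bb) P :=
      (hL2sz l).integrable one_le_two
    have isξ : Integrable (fun ω => ∑ bb, B bb l * ξ ω bb) P :=
      (hL2sξ l).integrable one_le_two
    have i345 : Integrable (fun ω => (∑ bb, B bb l * ξ ω bb) + (e ω l + ε ω l)) P :=
      isξ.add i45
    have i2345 : Integrable (fun ω => (∑ bb, C bb l * z ω bb) +
        ((∑ bb, B bb l * ξ ω bb) + (e ω l + ε ω l))) P := isz.add i345
    rw [integral_add (integrable_const (b l)) i2345, integral_const,
      integral_add isz i345, integral_add isξ i45, integral_add (hIe l) (hIε l)]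
    have hel : (∫ ω, e ω l ∂P) = 0 := by simpa [vmean] using congrFun he0 l
    have hεl : (∫ ω, ε ω l ∂P) = 0 := by simpa [vmean] using congrFun hε0 l
    rw [hel, hεl, integral_finset_sum _ (fun bb _ => (hIz bb).const_mul _),
      integral_finset_sum _ (fun bb _ => (hIξ bb).const_mul _)]
    simp only [integral_const_mul, measure_univ, ENNReal.toReal_one, probReal_univ, smul_eq_mul, one_mul]
    ring
  -- the intercept identity
  have hmatBx : Bᵀ - Bxᵀ
      = Bᵀ * vcov P δ δ * (vcov P x x)⁻¹ - Sεδ * (vcov P x x)⁻¹ := by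
    rw [hBx]
    have hxsplit : vcov P x x = vcov P ξ ξ + vcov P δ δ := by
      ext a bb
      rw [Matrix.add_apply, hvxx a bb]
    have hone : Bᵀ * vcov P ξ ξ * (vcov P x x)⁻¹
        + Bᵀ * vcov P δ δ * (vcov P x x)⁻¹ = Bᵀ := by
      rw [Matrix.mul_assoc, Matrix.mul_assoc, ← Matrix.mul_add, ← Matrix.add_mul,
        ← hxsplit, Matrix.mul_nonsing_inv _ hSxU, Matrix.mul_one]
    calc Bᵀ - (Bᵀ * vcov P ξ ξ * (vcov P x x)⁻¹ + Sεδ * (vcov P x x)⁻¹)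
        = (Bᵀ * vcov P ξ ξ * (vcov P x x)⁻¹ + Bᵀ * vcov P δ δ * (vcov P x x)⁻¹)
          - (Bᵀ * vcov P ξ ξ * (vcov P x x)⁻¹ + Sεδ * (vcov P x x)⁻¹) := by rw [hone]
      _ = Bᵀ * vcov P δ δ * (vcov P x x)⁻¹ - Sεδ * (vcov P x x)⁻¹ := by abel
  have hbxl : ∀ l, bx l = (∫ ω, y ω l ∂P) - (∑ a, C a l * ∫ ω, z ω a ∂P)
      - (∑ a, Bx a l * μ a) := by
    intro l
    have h := congrFun hbx l
    simp only [Pi.add_apply, Pi.sub_apply] at h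
    have h2 : Bᵀ.mulVec μ l - Bxᵀ.mulVec μ l
        = (Bᵀ * vcov P δ δ * (vcov P x x)⁻¹).mulVec μ l
          - (Sεδ * (vcov P x x)⁻¹).mulVec μ l := by
      have h3 := congrArg (fun N => N.mulVec μ l) hmatBx
      simpa only [Matrix.sub_mulVec, Pi.sub_apply] using h3
    have hBμ : Bᵀ.mulVec μ l = ∑ a, B a l * μ a := by
      simp [Matrix.mulVec, dotProduct, Matrix.transpose_apply]
    have hBxμ : Bxᵀ.mulVec μ l = ∑ a, Bx a l * μ a := by
      simp [Matrix.mulVec, dotProduct, Matrix.transpose_apply]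
    rw [hBμ, hBxμ] at h2
    have hsum : (∑ a, B a l * ∫ ω, ξ ω a ∂P) = ∑ a, B a l * μ a :=
      Finset.sum_congr rfl fun a _ => by rw [← hμξ a]
    rw [h, hmeany l, hsum]
    linarith [h2]
  -- auxiliary limits of w-coordinates
  have hρz : ∀ a, (∫ ω, w ω (Fin.castAdd m a) ∂P) = ∫ ω, z ω a ∂P := fun a => by
    rw [hwzfun a]
  have hρx : ∀ a, (∫ ω, w ω (Fin.natAdd q a) ∂P) = μ a := fun a => by
    rw [hwxfun a]
    exact (congrFun hμ a).symm
  -- the main almost-sure statement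
  have main : ∀ᵐ ω ∂P,
      Tendsto (fun n => (Chat n ω, Bxhat n ω)) atTop (𝓝 (C, Bx)) ∧
      Tendsto (fun n => bxhat n ω + (Chat n ω)ᵀ.mulVec z₀ + (Bxhat n ω)ᵀ.mulVec x₀)
        atTop (𝓝 (bx + Cᵀ.mulVec z₀ + Bxᵀ.mulVec x₀)) := by
    filter_upwards [H1, H2, H3, H4] with ω h1 h2 h3 h4
    have hSrrT : ∀ j l, Tendsto (fun n => Srr n ω j l) atTop (𝓝 (Sw j l)) := by
      intro j l
      have heq : (fun n : ℕ => (∑ i ∈ Finset.range n, r i ω j * r i ω l) / (n : ℝ)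
          - ((∑ i ∈ Finset.range n, r i ω j) / (n : ℝ))
            * ((∑ i ∈ Finset.range n, r i ω l) / (n : ℝ)))
          =ᶠ[atTop] fun n => Srr n ω j l := by
        filter_upwards [eventually_ge_atTop 1] with n hn
        rw [hSrr]
        simp only [hrbar]
        exact (sample_cov_identity hn (fun i => r i ω j) (fun i => r i ω l)).symm
      have hval : Sw j l = (∫ ω, w ω j * w ω l ∂P)
          - (∫ ω, w ω j ∂P) * (∫ ω, w ω l ∂P) := by
        rw [hSwdef, vcov_apply hL2w hL2w]
        rfl
      rw [hval]
      exact ((h3 j l).sub ((h1 j).mul (h1 l))).congr' heq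
    have hSryT : ∀ j l, Tendsto (fun n => Sry n ω j l) atTop (𝓝 (T j l)) := by
      intro j l
      have heq : (fun n : ℕ => (∑ i ∈ Finset.range n, r i ω j * ys i ω l) / (n : ℝ)
          - ((∑ i ∈ Finset.range n, r i ω j) / (n : ℝ))
            * ((∑ i ∈ Finset.range n, ys i ω l) / (n : ℝ)))
          =ᶠ[atTop] fun n => Sry n ω j l := by
        filter_upwards [eventually_ge_atTop 1] with n hn
        rw [hSry]
        simp only [hrbar, hybar]
        exact (sample_cov_identity hn (fun i => r i ω j) (fun i => ys i ω l)).symm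
      have hval : T j l = (∫ ω, w ω j * y ω l ∂P)
          - (∫ ω, w ω j ∂P) * (∫ ω, y ω l ∂P) := by
        rw [hTdef, vcov_apply hL2w hL2y]
        rfl
      rw [hval]
      exact ((h4 j l).sub ((h1 j).mul (h2 l))).congr' heq
    have hSrrM : Tendsto (fun n => Srr n ω) atTop (𝓝 Sw) := tendsto_matrix_iff.mpr hSrrT
    have hSryM : Tendsto (fun n => Sry n ω) atTop (𝓝 T) := tendsto_matrix_iff.mpr hSryT
    have hdetT : Tendsto (fun n => (Srr n ω).det) atTop (𝓝 Sw.det) :=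
      ((continuous_id.matrix_det).tendsto Sw).comp hSrrM
    have hevne : ∀ᶠ n in atTop, (Srr n ω).det ≠ 0 := hdetT.eventually_ne hdetSw
    have hadjT : Tendsto (fun n => (Srr n ω).adjugate) atTop (𝓝 Sw.adjugate) :=
      ((continuous_id.matrix_adjugate).tendsto Sw).comp hSrrM
    have hinvT : Tendsto (fun n => (Srr n ω)⁻¹) atTop (𝓝 Sw⁻¹) := by
      simp only [Matrix.inv_def, Ring.inverse_eq_inv']
      exact Tendsto.smul (hdetT.inv₀ hdetSw) hadjT
    have hprodT : Tendsto (fun n => (Srr n ω)⁻¹ * Sry n ω) atTop (𝓝 (Sw⁻¹ * T)) := by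
      have hc : Continuous fun p : Matrix (Fin (q + m)) (Fin (q + m)) ℝ
          × Matrix (Fin (q + m)) (Fin d) ℝ => p.1 * p.2 :=
        continuous_fst.matrix_mul continuous_snd
      exact (hc.tendsto _).comp (hinvT.prodMk_nhds hSryM)
    have hMPT : Tendsto (fun n => moorePenrose (Srr n ω) * Sry n ω) atTop (𝓝 M) := by
      rw [← hkey]
      exact hprodT.congr' (hevne.mono fun n hn => by simp only [moorePenrose_of_det hn])
    have hCT : ∀ a l, Tendsto (fun n => Chat n ω a l) atTop (𝓝 (C a l)) := by
      intro a l
      have h := (tendsto_matrix_iff.mp hMPT) (Fin.castAdd m a) l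
      rw [hMtop a l] at h
      simp only [hChat]
      exact h
    have hBT : ∀ a l, Tendsto (fun n => Bxhat n ω a l) atTop (𝓝 (Bx a l)) := by
      intro a l
      have h := (tendsto_matrix_iff.mp hMPT) (Fin.natAdd q a) l
      rw [hMbot a l] at h
      simp only [hBxhat]
      exact h
    constructor
    · exact Filter.Tendsto.prodMk_nhds (tendsto_matrix_iff.mpr hCT)
        (tendsto_matrix_iff.mpr hBT)
    · have hrbz : ∀ a, Tendsto (fun n => rbar n ω (Fin.castAdd m a)) atTop
          (𝓝 (∫ ω, z ω a ∂P)) := fun a => by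
        have h := h1 (Fin.castAdd m a)
        rw [hρz a] at h
        exact h.congr fun n => (hrbar n ω _).symm
      have hrbx : ∀ a, Tendsto (fun n => rbar n ω (Fin.natAdd q a)) atTop
          (𝓝 (μ a)) := fun a => by
        have h := h1 (Fin.natAdd q a)
        rw [hρx a] at h
        exact h.congr fun n => (hrbar n ω _).symm
      have hybT : ∀ l, Tendsto (fun n => ybar n ω l) atTop (𝓝 (∫ ω, y ω l ∂P)) :=
        fun l => (h2 l).congr fun n => (hybar n ω l).symm
      rw [tendsto_pi_nhds]
      intro l
      have hpt : ∀ n, (bxhat n ω + (Chat n ω)ᵀ.mulVec z₀ + (Bxhat n ω)ᵀ.mulVec x₀) l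
          = ((((ybar n ω l - ∑ a, Chat n ω a l * rbar n ω (Fin.castAdd m a))
            - ∑ a, Bxhat n ω a l * rbar n ω (Fin.natAdd q a))
            + ∑ a, Chat n ω a l * z₀ a) + ∑ a, Bxhat n ω a l * x₀ a) := by
        intro n
        rw [hbxhat]
        simp only [Pi.add_apply, Pi.sub_apply, Matrix.mulVec, dotProduct,
          Matrix.transpose_apply]
      have hval : (bx + Cᵀ.mulVec z₀ + Bxᵀ.mulVec x₀) l
          = ((((∫ ω, y ω l ∂P) - ∑ a, C a l * ∫ ω, z ω a ∂P)
            - ∑ a, Bx a l * μ a) + ∑ a, C a l * z₀ a) + ∑ a, Bx a l * x₀ a := by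
        simp only [Pi.add_apply, Matrix.mulVec, dotProduct, Matrix.transpose_apply]
        rw [hbxl l]
      rw [hval]
      refine Tendsto.congr (fun n => (hpt n).symm) ?_
      exact ((((hybT l).sub (tendsto_finset_sum _ fun a _ => (hCT a l).mul (hrbz a))).sub
        (tendsto_finset_sum _ fun a _ => (hBT a l).mul (hrbx a))).add
        (tendsto_finset_sum _ fun a _ => (hCT a l).mul_const (z₀ a))).add
        (tendsto_finset_sum _ fun a _ => (hBT a l).mul_const (x₀ a))
  exact ⟨main.mono fun ω h => h.1, main.mono fun ω h => h.2⟩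
end
end

section
/- In the exponential EIV model y = β e^{λ ξ} + e, x = ξ + δ, under assumption (e) with λ real, the best predictor is E[y | x] = β_x exp(λ_x x), where λ_x = K λ, β_x = β e^{λ(1−K)μ} exp(λ² K σ_δ²/2), K = σ_ξ²/σ_x², μ = E x. -/
open MeasureTheory ProbabilityTheory Real
open scoped NNReal

set_option maxHeartbeats 1000000

noncomputable section

open scoped ENNReal

namespace Stmt18Aux

/-- Exponential tilting of a Gaussian measure. -/
lemma gaussian_tilt (m : ℝ) (v : ℝ≥0) (l : ℝ) :
    (gaussianReal m v).withDensity (fun s => ENNReal.ofReal (rexp (l * s)))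
      = (ENNReal.ofReal (rexp (l * m + l ^ 2 * (v : ℝ) / 2))) • gaussianReal (m + l * (v : ℝ)) v := by
  classical
  by_cases hv : v = 0
  · subst hv
    simp only [NNReal.coe_zero, mul_zero, zero_div, add_zero, gaussianReal_zero_var]
    ext s hs
    rw [withDensity_apply _ hs, setLIntegral_dirac' (by fun_prop) hs]
    simp only [Measure.smul_apply, Measure.dirac_apply' _ hs, smul_eq_mul, Set.indicator]
    split_ifs <;> simp
  · have hv' : (v : ℝ) ≠ 0 := by exact_mod_cast hv
    have hvpos : (0 : ℝ) < (v : ℝ) := lt_of_le_of_ne (NNReal.coe_nonneg v) (Ne.symm hv')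
    rw [gaussianReal_of_var_ne_zero _ hv, gaussianReal_of_var_ne_zero _ hv,
      ← withDensity_mul _ (measurable_gaussianPDF _ _)
        (by fun_prop : Measurable fun s => ENNReal.ofReal (rexp (l * s))),
      ← withDensity_smul _ (measurable_gaussianPDF _ _)]
    congr 1
    funext s
    simp only [Pi.mul_apply, Pi.smul_apply, gaussianPDF, smul_eq_mul]
    rw [← ENNReal.ofReal_mul (gaussianPDFReal_nonneg _ _ _), ← ENNReal.ofReal_mul (exp_nonneg _)]
    congr 1
    have key : -(s - m) ^ 2 / (2 * (v : ℝ)) + l * s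
        = (l * m + l ^ 2 * (v : ℝ) / 2) + -(s - (m + l * (v : ℝ))) ^ 2 / (2 * (v : ℝ)) := by
      field_simp
      ring
    calc gaussianPDFReal m v s * rexp (l * s)
        = (√(2 * π * (v : ℝ)))⁻¹ * rexp (-(s - m) ^ 2 / (2 * (v : ℝ)) + l * s) := by
          rw [gaussianPDFReal, Real.exp_add]; ring
      _ = (√(2 * π * (v : ℝ)))⁻¹ *
            rexp ((l * m + l ^ 2 * (v : ℝ) / 2) + -(s - (m + l * (v : ℝ))) ^ 2 / (2 * (v : ℝ))) := by
          rw [key]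
      _ = rexp (l * m + l ^ 2 * (v : ℝ) / 2) * gaussianPDFReal (m + l * (v : ℝ)) v s := by
          rw [gaussianPDFReal, Real.exp_add]; ring

lemma lintegral_exp_gaussian (m : ℝ) (v : ℝ≥0) (l : ℝ) :
    ∫⁻ s, ENNReal.ofReal (rexp (l * s)) ∂(gaussianReal m v)
      = ENNReal.ofReal (rexp (l * m + l ^ 2 * (v : ℝ) / 2)) := by
  have h := congrArg (fun μ : Measure ℝ => μ Set.univ) (gaussian_tilt m v l)
  simpa [withDensity_apply _ MeasurableSet.univ, Measure.smul_apply] using h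

lemma integrable_exp_gaussian (m : ℝ) (v : ℝ≥0) (l : ℝ) :
    Integrable (fun s => rexp (l * s)) (gaussianReal m v) := by
  refine ⟨(by fun_prop : Measurable fun s => rexp (l * s)).aestronglyMeasurable, ?_⟩
  rw [hasFiniteIntegral_iff_ofReal (ae_of_all _ fun s => exp_nonneg _),
    lintegral_exp_gaussian]
  exact ENNReal.ofReal_lt_top

lemma integrable_id_gaussian (m : ℝ) (v : ℝ≥0) :
    Integrable (fun s : ℝ => s) (gaussianReal m v) := by
  have h := (integrable_exp_gaussian m v 1).add (integrable_exp_gaussian m v (-1))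
  refine h.mono' aestronglyMeasurable_id (ae_of_all _ fun s => ?_)
  simp only [Real.norm_eq_abs, one_mul, neg_one_mul]
  have h1 : ∀ t : ℝ, t ≤ rexp t := fun t =>
    (le_add_of_nonneg_right zero_le_one).trans (Real.add_one_le_exp t)
  rcases le_or_gt 0 s with hs | hs
  · rw [abs_of_nonneg hs]
    exact (h1 s).trans (le_add_of_nonneg_right (exp_nonneg _))
  · rw [abs_of_neg hs]
    exact (h1 (-s)).trans (le_add_of_nonneg_left (exp_nonneg _))

lemma gaussian_mean (m : ℝ) (v : ℝ≥0) : ∫ s, s ∂(gaussianReal m v) = m := by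
  have hone : (⟨(-1 : ℝ) ^ 2, sq_nonneg _⟩ : ℝ≥0) = 1 := by ext; norm_num
  have hrefl : Measure.map (fun s : ℝ => 2 * m - s) (gaussianReal m v) = gaussianReal m v := by
    have h1 : (fun s : ℝ => 2 * m - s) = (fun u : ℝ => u + 2 * m) ∘ (fun s : ℝ => -1 * s) := by
      funext s; simp; ring
    rw [h1, ← Measure.map_map (by fun_prop) (by fun_prop), gaussianReal_map_const_mul,
      gaussianReal_map_add_const]
    congr 1
    · ring
    · ext; simp
  have hInt := integrable_id_gaussian m v
  have h2 : ∫ s, s ∂(gaussianReal m v) = ∫ s, (2 * m - s) ∂(gaussianReal m v) := by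
    conv_lhs => rw [← hrefl]
    rw [integral_map (f := fun s : ℝ => s) (φ := fun s : ℝ => 2 * m - s)
      (by fun_prop) aestronglyMeasurable_id]
  have h3 : ∫ s, (2 * m - s) ∂(gaussianReal m v)
      = 2 * m - ∫ s, s ∂(gaussianReal m v) := by
    rw [integral_sub (integrable_const _) hInt, integral_const]
    simp
  rw [h3] at h2
  linarith

lemma prod_wd {μ ν : Measure ℝ} [SigmaFinite μ] [SigmaFinite ν] {f g : ℝ → ℝ≥0∞}
    (hf : Measurable f) (hg : Measurable g)
    [SigmaFinite (μ.withDensity f)] [SigmaFinite (ν.withDensity g)] :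
    (μ.withDensity f).prod (ν.withDensity g)
      = (μ.prod ν).withDensity (fun p => f p.1 * g p.2) := by
  refine Measure.prod_eq fun s t hs ht => ?_
  rw [withDensity_apply _ (hs.prod ht), ← Measure.prod_restrict,
    lintegral_prod_mul hf.aemeasurable hg.aemeasurable,
    withDensity_apply _ hs, withDensity_apply _ ht]

lemma smul_prod {c : ℝ≥0∞} (hc : c ≠ ∞) (μ ν : Measure ℝ) [SigmaFinite μ] [SigmaFinite ν] :
    (c • μ).prod ν = c • (μ.prod ν) := by
  haveI : SigmaFinite (μ.withDensity fun _ => c) :=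
    SigmaFinite.withDensity_of_ne_top' (fun _ => hc)
  haveI : SigmaFinite (ν.withDensity fun _ => (1 : ℝ≥0∞)) :=
    SigmaFinite.withDensity_of_ne_top' (fun _ => ENNReal.one_ne_top)
  calc (c • μ).prod ν
      = (μ.withDensity fun _ => c).prod (ν.withDensity fun _ => (1 : ℝ≥0∞)) := by
        rw [withDensity_const, withDensity_const, one_smul]
    _ = (μ.prod ν).withDensity (fun _ => c * 1) := prod_wd measurable_const measurable_const
    _ = c • (μ.prod ν) := by rw [mul_one, withDensity_const]

lemma prod_smul {c : ℝ≥0∞} (hc : c ≠ ∞) (μ ν : Measure ℝ) [SigmaFinite μ] [SigmaFinite ν] :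
    μ.prod (c • ν) = c • (μ.prod ν) := by
  haveI : SigmaFinite (ν.withDensity fun _ => c) :=
    SigmaFinite.withDensity_of_ne_top' (fun _ => hc)
  haveI : SigmaFinite (μ.withDensity fun _ => (1 : ℝ≥0∞)) :=
    SigmaFinite.withDensity_of_ne_top' (fun _ => ENNReal.one_ne_top)
  calc μ.prod (c • ν)
      = (μ.withDensity fun _ => (1 : ℝ≥0∞)).prod (ν.withDensity fun _ => c) := by
        rw [withDensity_const, withDensity_const, one_smul]
    _ = (μ.prod ν).withDensity (fun _ => 1 * c) := prod_wd measurable_const measurable_const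
    _ = c • (μ.prod ν) := by rw [one_mul, withDensity_const]

lemma smul_prod2 {c d : ℝ≥0∞} (hc : c ≠ ∞) (hd : d ≠ ∞) (μ ν : Measure ℝ)
    [SigmaFinite μ] [SigmaFinite ν] :
    (c • μ).prod (d • ν) = (c * d) • (μ.prod ν) := by
  haveI : SigmaFinite (μ.withDensity fun _ => c) :=
    SigmaFinite.withDensity_of_ne_top' (fun _ => hc)
  haveI : SigmaFinite (ν.withDensity fun _ => d) :=
    SigmaFinite.withDensity_of_ne_top' (fun _ => hd)
  calc (c • μ).prod (d • ν)
      = (μ.withDensity fun _ => c).prod (ν.withDensity fun _ => d) := by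
        rw [withDensity_const, withDensity_const]
    _ = (μ.prod ν).withDensity (fun _ => c * d) := prod_wd measurable_const measurable_const
    _ = (c * d) • (μ.prod ν) := by rw [withDensity_const]

lemma map_add_shift (a b : ℝ) (w₁ w₂ : ℝ≥0) :
    Measure.map (fun p : ℝ × ℝ => p.1 + p.2) ((gaussianReal a w₁).prod (gaussianReal b w₂))
      = Measure.map (fun p : ℝ × ℝ => p.1 + p.2)
          ((gaussianReal (a + b) w₁).prod (gaussianReal 0 w₂)) := by
  have h1 : gaussianReal b w₂ = (gaussianReal 0 w₂).map (· + b) := by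
    rw [gaussianReal_map_add_const, zero_add]
  have h2 : gaussianReal (a + b) w₁ = (gaussianReal a w₁).map (· + b) := by
    rw [gaussianReal_map_add_const]
  calc Measure.map (fun p : ℝ × ℝ => p.1 + p.2) ((gaussianReal a w₁).prod (gaussianReal b w₂))
      = Measure.map (fun p : ℝ × ℝ => p.1 + p.2)
          ((Measure.map id (gaussianReal a w₁)).prod ((gaussianReal 0 w₂).map (· + b))) := by
        rw [Measure.map_id, ← h1]
    _ = Measure.map (fun p : ℝ × ℝ => p.1 + p.2)
          (Measure.map (Prod.map id (· + b)) ((gaussianReal a w₁).prod (gaussianReal 0 w₂))) := by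
        rw [Measure.map_prod_map _ _ measurable_id (by fun_prop)]
    _ = Measure.map (fun p : ℝ × ℝ => p.1 + p.2 + b)
          ((gaussianReal a w₁).prod (gaussianReal 0 w₂)) := by
        rw [Measure.map_map (by fun_prop) (by fun_prop)]
        congr 1
        funext p
        simp [Prod.map]
        ring
    _ = Measure.map (fun p : ℝ × ℝ => p.1 + p.2)
          (Measure.map (Prod.map (· + b) id) ((gaussianReal a w₁).prod (gaussianReal 0 w₂))) := by
        rw [Measure.map_map (by fun_prop) (by fun_prop)]
        congr 1
        funext p
        show p.1 + p.2 + b = (p.1 + b) + p.2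
        ring
    _ = Measure.map (fun p : ℝ × ℝ => p.1 + p.2)
          (((gaussianReal a w₁).map (· + b)).prod (Measure.map id (gaussianReal 0 w₂))) := by
        rw [Measure.map_prod_map _ _ (by fun_prop) measurable_id]
    _ = Measure.map (fun p : ℝ × ℝ => p.1 + p.2)
          ((gaussianReal (a + b) w₁).prod (gaussianReal 0 w₂)) := by
        rw [Measure.map_id, ← h2]

/-- The core measure identity. -/
lemma core (mx : ℝ) (vξ vδ : ℝ≥0) (lam K : ℝ) (hKsum : K * ((vξ : ℝ) + (vδ : ℝ)) = vξ) :
    Measure.map (fun p : ℝ × ℝ => p.1 + p.2)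
        (((gaussianReal mx vξ).prod (gaussianReal 0 vδ)).withDensity
          (fun p => ENNReal.ofReal (rexp (lam * p.1))))
      = ENNReal.ofReal (rexp (lam * (1 - K) * mx + lam ^ 2 * K * (vδ : ℝ) / 2)) •
        Measure.map (fun p : ℝ × ℝ => p.1 + p.2)
          (((gaussianReal mx vξ).prod (gaussianReal 0 vδ)).withDensity
            (fun p => ENNReal.ofReal (rexp (K * lam * (p.1 + p.2))))) := by
  -- rewrite LHS density as product form
  have hfL : (fun p : ℝ × ℝ => ENNReal.ofReal (rexp (lam * p.1)))
      = fun p : ℝ × ℝ => (fun s => ENNReal.ofReal (rexp (lam * s))) p.1 *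
          (fun s => ENNReal.ofReal (rexp (0 * s))) p.2 := by
    funext p; simp
  have hfR : (fun p : ℝ × ℝ => ENNReal.ofReal (rexp (K * lam * (p.1 + p.2))))
      = fun p : ℝ × ℝ => (fun s => ENNReal.ofReal (rexp (K * lam * s))) p.1 *
          (fun s => ENNReal.ofReal (rexp (K * lam * s))) p.2 := by
    funext p
    rw [← ENNReal.ofReal_mul (exp_nonneg _), ← Real.exp_add]
    ring_nf
  have h1 : ((gaussianReal mx vξ).prod (gaussianReal 0 vδ)).withDensity
      (fun p => ENNReal.ofReal (rexp (lam * p.1)))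
      = ((gaussianReal mx vξ).withDensity (fun s => ENNReal.ofReal (rexp (lam * s)))).prod
        ((gaussianReal 0 vδ).withDensity (fun s => ENNReal.ofReal (rexp (0 * s)))) :=
    by rw [prod_wd (μ := gaussianReal mx vξ) (ν := gaussianReal 0 vδ)
            (f := fun s => ENNReal.ofReal (rexp (lam * s)))
            (g := fun s => ENNReal.ofReal (rexp (0 * s))) (by fun_prop) (by fun_prop), hfL]
  have h2 : ((gaussianReal mx vξ).prod (gaussianReal 0 vδ)).withDensity
      (fun p => ENNReal.ofReal (rexp (K * lam * (p.1 + p.2))))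
      = ((gaussianReal mx vξ).withDensity (fun s => ENNReal.ofReal (rexp (K * lam * s)))).prod
        ((gaussianReal 0 vδ).withDensity (fun s => ENNReal.ofReal (rexp (K * lam * s)))) :=
    by rw [prod_wd (μ := gaussianReal mx vξ) (ν := gaussianReal 0 vδ)
            (f := fun s => ENNReal.ofReal (rexp (K * lam * s)))
            (g := fun s => ENNReal.ofReal (rexp (K * lam * s))) (by fun_prop) (by fun_prop), hfR]
  rw [h1, h2, gaussian_tilt, gaussian_tilt, gaussian_tilt, gaussian_tilt]
  simp only [zero_mul, mul_zero, zero_add, add_zero, ne_eq, OfNat.ofNat_ne_zero,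
    not_false_eq_true, zero_pow, zero_div, Real.exp_zero, ENNReal.ofReal_one, one_smul]
  have hmean : mx + lam * (vξ : ℝ) = mx + K * lam * (vξ : ℝ) + K * lam * (vδ : ℝ) := by
    have h : lam * (vξ : ℝ) = lam * (K * ((vξ : ℝ) + (vδ : ℝ))) := by rw [hKsum]
    linarith [h]
  rw [smul_prod ENNReal.ofReal_ne_top (gaussianReal (mx + lam * (vξ : ℝ)) vξ) (gaussianReal 0 vδ),
    smul_prod2 ENNReal.ofReal_ne_top ENNReal.ofReal_ne_top
      (gaussianReal (mx + K * lam * (vξ : ℝ)) vξ) (gaussianReal (K * lam * (vδ : ℝ)) vδ),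
    Measure.map_smul, Measure.map_smul,
    map_add_shift (mx + K * lam * (vξ : ℝ)) (K * lam * (vδ : ℝ)) vξ vδ, ← hmean, smul_smul]
  congr 1
  rw [← ENNReal.ofReal_mul (exp_nonneg _), ← ENNReal.ofReal_mul (exp_nonneg _),
    ← Real.exp_add, ← Real.exp_add]
  rw [ENNReal.ofReal_eq_ofReal_iff (exp_nonneg _) (exp_nonneg _), Real.exp_eq_exp]
  linear_combination (-(lam ^ 2 / 2 * (1 + K))) * hKsum

end Stmt18Aux

open Stmt18Aux in
/-- In the exponential EIV model `y = β e^{λξ} + e`, `x = ξ + δ`, with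
`ξ, e, δ` independent, `ξ, δ` Gaussian, `E e = E δ = 0` and `σx² > 0`, the best predictor is
`E[y | x] = β_x exp(λ_x x)` with `λ_x = K λ` and
`β_x = β e^{λ(1−K)μ} exp(λ² K σδ² / 2)`, where `K = σξ²/σx²` and `μ = E x`. -/
theorem stmt18 {Ω : Type*} [MeasurableSpace Ω] (P : Measure Ω) [IsProbabilityMeasure P]
    (ξ e δ x y : Ω → ℝ) (hξm : Measurable ξ) (hem : Measurable e) (hδm : Measurable δ)
    (β lam : ℝ) (mξ : ℝ) (vξ vδ : ℝ≥0)
    (hξ : Measure.map ξ P = gaussianReal mξ vξ)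
    (hδ : Measure.map δ P = gaussianReal 0 vδ)
    (hindep : ProbabilityTheory.IndepFun ξ (fun ω => (e ω, δ ω)) P)
    (hindep' : ProbabilityTheory.IndepFun e δ P)
    (he0 : ∫ ω, e ω ∂P = 0) (heInt : Integrable e P)
    (hy : ∀ ω, y ω = β * Real.exp (lam * ξ ω) + e ω)
    (hx : ∀ ω, x ω = ξ ω + δ ω)
    (hvx : (0 : ℝ≥0) < vξ + vδ)
    (μ : ℝ) (hμ : μ = ∫ ω, x ω ∂P)
    (K : ℝ) (hK : K = (vξ : ℝ) / ((vξ : ℝ) + (vδ : ℝ))) :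
    P[y | MeasurableSpace.comap x inferInstance]
      =ᵐ[P] fun ω =>
        (β * Real.exp (lam * (1 - K) * μ) * Real.exp (lam ^ 2 * K * (vδ : ℝ) / 2))
          * Real.exp (K * lam * x ω) := by
  have hxfun : x = fun ω => ξ ω + δ ω := funext hx
  have hyfun : y = fun ω => β * rexp (lam * ξ ω) + e ω := funext hy
  subst hxfun hyfun
  have hxm : Measurable fun ω => ξ ω + δ ω := hξm.add hδm
  have hm : MeasurableSpace.comap (fun ω => ξ ω + δ ω) inferInstance ≤ _ := hxm.comap_le
  have hSm : Measurable fun p : ℝ × ℝ => p.1 + p.2 := by fun_prop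
  have hTm : Measurable fun ω => (ξ ω, δ ω) := hξm.prodMk hδm
  have hindepδ : IndepFun ξ δ P := hindep.comp measurable_id measurable_snd
  have hmapT : Measure.map (fun ω => (ξ ω, δ ω)) P
      = (gaussianReal mξ vξ).prod (gaussianReal 0 vδ) := by
    rw [(indepFun_iff_map_prod_eq_prod_map_map hξm.aemeasurable hδm.aemeasurable).mp hindepδ,
      hξ, hδ]
  -- integrabilities
  have hIξ : Integrable (fun ω => rexp (lam * ξ ω)) P := by
    have h := integrable_exp_gaussian mξ vξ lam
    rw [← hξ] at h
    exact (integrable_map_measure (Measurable.aestronglyMeasurable (by fun_prop))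
      hξm.aemeasurable).mp h
  have hIprod : Integrable (fun p : ℝ × ℝ => rexp (K * lam * (p.1 + p.2)))
      ((gaussianReal mξ vξ).prod (gaussianReal 0 vδ)) := by
    have h := (integrable_exp_gaussian mξ vξ (K * lam)).mul_prod
      (integrable_exp_gaussian 0 vδ (K * lam))
    have hfe : (fun p : ℝ × ℝ => rexp (K * lam * p.1) * rexp (K * lam * p.2))
        = fun p : ℝ × ℝ => rexp (K * lam * (p.1 + p.2)) := by
      funext p; rw [← Real.exp_add]; ring_nf
    rwa [hfe] at h
  have hIx : Integrable (fun ω => rexp (K * lam * (ξ ω + δ ω))) P := by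
    have h := hIprod
    rw [← hmapT] at h
    exact (integrable_map_measure (Measurable.aestronglyMeasurable (by fun_prop))
      hTm.aemeasurable).mp h
  have hIy : Integrable (fun ω => β * rexp (lam * ξ ω) + e ω) P := (hIξ.const_mul β).add heInt
  -- mean of x
  have hμval : μ = mξ := by
    have hIξ' : Integrable ξ P := by
      have h := integrable_id_gaussian mξ vξ
      rw [← hξ] at h
      exact (integrable_map_measure aestronglyMeasurable_id hξm.aemeasurable).mp h
    have hIδ' : Integrable δ P := by
      have h := integrable_id_gaussian 0 vδ
      rw [← hδ] at h
      exact (integrable_map_measure aestronglyMeasurable_id hδm.aemeasurable).mp h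
    have h1 : ∫ ω, ξ ω ∂P = mξ := by
      have h := integral_map (μ := P) (φ := ξ) (f := fun s : ℝ => s) hξm.aemeasurable
        aestronglyMeasurable_id
      rw [← h, hξ, gaussian_mean]
    have h2 : ∫ ω, δ ω ∂P = 0 := by
      have h := integral_map (μ := P) (φ := δ) (f := fun s : ℝ => s) hδm.aemeasurable
        aestronglyMeasurable_id
      rw [← h, hδ, gaussian_mean]
    rw [hμ, integral_add hIξ' hIδ', h1, h2, add_zero]
  have hK' : K * ((vξ : ℝ) + (vδ : ℝ)) = (vξ : ℝ) := by
    have hpos : (0 : ℝ) < (vξ : ℝ) + (vδ : ℝ) := by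
      have := NNReal.coe_pos.mpr hvx
      push_cast at this
      linarith
    rw [hK]
    field_simp
  haveI : SigmaFinite (P.trim hm) := inferInstance
  refine (ae_eq_condExp_of_forall_setIntegral_eq hm hIy ?_ ?_ ?_).symm
  · intro s _ _
    exact (hIx.const_mul _).integrableOn
  · rintro s ⟨A, hA, rfl⟩ -
    have hsm : MeasurableSet ((fun ω => ξ ω + δ ω) ⁻¹' A) := hxm hA
    -- the error part integrates to zero on the set
    have hUm : Measurable fun ω => (ξ ω, (e ω, δ ω)) := hξm.prodMk (hem.prodMk hδm)
    have hmapU : Measure.map (fun ω => (ξ ω, (e ω, δ ω))) P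
        = (gaussianReal mξ vξ).prod ((Measure.map e P).prod (gaussianReal 0 vδ)) := by
      rw [(indepFun_iff_map_prod_eq_prod_map_map hξm.aemeasurable
        (hem.prodMk hδm).aemeasurable).mp hindep, hξ]
      congr 1
      rw [(indepFun_iff_map_prod_eq_prod_map_map hem.aemeasurable hδm.aemeasurable).mp hindep',
        hδ]
    haveI : IsProbabilityMeasure (Measure.map e P) := Measure.isProbabilityMeasure_map hem.aemeasurable
    have hFm : Measurable fun q : ℝ × (ℝ × ℝ) =>
        q.2.1 * Set.indicator A (fun _ => (1 : ℝ)) (q.1 + q.2.2) := by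
      have hind : Measurable (Set.indicator A (fun _ => (1 : ℝ))) :=
        measurable_const.indicator hA
      exact (measurable_snd.fst).mul (hind.comp (measurable_fst.add measurable_snd.snd))
    have he_zero : ∫ ω in (fun ω => ξ ω + δ ω) ⁻¹' A, e ω ∂P = 0 := by
      have key : ∫ ω in (fun ω => ξ ω + δ ω) ⁻¹' A, e ω ∂P
          = ∫ q, q.2.1 * Set.indicator A (fun _ => (1 : ℝ)) (q.1 + q.2.2)
              ∂(Measure.map (fun ω => (ξ ω, (e ω, δ ω))) P) := by
        rw [integral_map hUm.aemeasurable hFm.aestronglyMeasurable, ← integral_indicator hsm]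
        congr 1
        funext ω
        by_cases hω : ξ ω + δ ω ∈ A <;>
          simp [Set.indicator, hω]
      rw [key, hmapU]
      have hFI : Integrable (fun q : ℝ × (ℝ × ℝ) =>
          q.2.1 * Set.indicator A (fun _ => (1 : ℝ)) (q.1 + q.2.2))
          ((gaussianReal mξ vξ).prod ((Measure.map e P).prod (gaussianReal 0 vδ))) := by
        have hInt2 : Integrable (fun q : ℝ × (ℝ × ℝ) => q.2.1)
            ((gaussianReal mξ vξ).prod ((Measure.map e P).prod (gaussianReal 0 vδ))) := by
          rw [← hmapU]
          exact (integrable_map_measure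
            (Measurable.aestronglyMeasurable (by fun_prop)) hUm.aemeasurable).mpr heInt
        refine hInt2.abs.mono' hFm.aestronglyMeasurable (ae_of_all _ fun q => ?_)
        rw [Real.norm_eq_abs, abs_mul]
        have : |Set.indicator A (fun _ => (1 : ℝ)) (q.1 + q.2.2)| ≤ 1 := by
          rw [Set.indicator]
          split_ifs <;> simp
        calc |q.2.1| * |Set.indicator A (fun _ => (1 : ℝ)) (q.1 + q.2.2)|
            ≤ |q.2.1| * 1 := by gcongr
          _ = |q.2.1| := mul_one _
      rw [MeasureTheory.integral_prod _ hFI]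
      have he0' : ∫ u, u ∂(Measure.map e P) = 0 := by
        have h := integral_map (μ := P) (φ := e) (f := fun s : ℝ => s) hem.aemeasurable
          aestronglyMeasurable_id
        rw [h, he0]
      have hinner : ∀ s : ℝ, (∫ q : ℝ × ℝ,
          q.1 * Set.indicator A (fun _ => (1 : ℝ)) (s + q.2)
            ∂((Measure.map e P).prod (gaussianReal 0 vδ))) = 0 := by
        intro s
        rw [integral_prod_mul (f := fun u : ℝ => u)
          (g := fun t : ℝ => Set.indicator A (fun _ => (1 : ℝ)) (s + t)), he0', zero_mul]
      simp only [hinner, integral_zero]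
    -- the main part
    have conv1 : ∫ ω in (fun ω => ξ ω + δ ω) ⁻¹' A, rexp (lam * ξ ω) ∂P
        = (∫⁻ ω in (fun ω => ξ ω + δ ω) ⁻¹' A, ENNReal.ofReal (rexp (lam * ξ ω)) ∂P).toReal := by
      rw [integral_eq_lintegral_of_nonneg_ae (ae_of_all _ fun ω => exp_nonneg _)
        (Measurable.aestronglyMeasurable (by fun_prop))]
    have conv2 : ∫ ω in (fun ω => ξ ω + δ ω) ⁻¹' A, rexp (K * lam * (ξ ω + δ ω)) ∂P
        = (∫⁻ ω in (fun ω => ξ ω + δ ω) ⁻¹' A,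
            ENNReal.ofReal (rexp (K * lam * (ξ ω + δ ω))) ∂P).toReal := by
      rw [integral_eq_lintegral_of_nonneg_ae (ae_of_all _ fun ω => exp_nonneg _)
        (Measurable.aestronglyMeasurable (by fun_prop))]
    have lint1 : Measure.map (fun p : ℝ × ℝ => p.1 + p.2)
        (((gaussianReal mξ vξ).prod (gaussianReal 0 vδ)).withDensity
          (fun p => ENNReal.ofReal (rexp (lam * p.1)))) A
        = ∫⁻ ω in (fun ω => ξ ω + δ ω) ⁻¹' A, ENNReal.ofReal (rexp (lam * ξ ω)) ∂P := by
      rw [Measure.map_apply hSm hA, withDensity_apply _ (hSm hA), ← hmapT,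
        setLIntegral_map (hSm hA) (by fun_prop) hTm]
      rfl
    have lint2 : Measure.map (fun p : ℝ × ℝ => p.1 + p.2)
        (((gaussianReal mξ vξ).prod (gaussianReal 0 vδ)).withDensity
          (fun p => ENNReal.ofReal (rexp (K * lam * (p.1 + p.2))))) A
        = ∫⁻ ω in (fun ω => ξ ω + δ ω) ⁻¹' A,
            ENNReal.ofReal (rexp (K * lam * (ξ ω + δ ω))) ∂P := by
      rw [Measure.map_apply hSm hA, withDensity_apply _ (hSm hA), ← hmapT,
        setLIntegral_map (hSm hA) (by fun_prop) hTm]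
      rfl
    have hmain : ∫ ω in (fun ω => ξ ω + δ ω) ⁻¹' A, rexp (lam * ξ ω) ∂P
        = rexp (lam * (1 - K) * mξ + lam ^ 2 * K * (vδ : ℝ) / 2) *
          ∫ ω in (fun ω => ξ ω + δ ω) ⁻¹' A, rexp (K * lam * (ξ ω + δ ω)) ∂P := by
      rw [conv1, conv2, ← lint1, ← lint2, core mξ vξ vδ lam K hK', Measure.smul_apply,
        smul_eq_mul, ENNReal.toReal_mul, ENNReal.toReal_ofReal (exp_nonneg _)]
    rw [integral_add (hIξ.const_mul β).integrableOn heInt.integrableOn, he_zero, add_zero,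
      MeasureTheory.integral_const_mul, MeasureTheory.integral_const_mul, hmain, hμval,
      Real.exp_add]
    ring
  · refine ⟨fun ω => (β * rexp (lam * (1 - K) * μ) * rexp (lam ^ 2 * K * (vδ : ℝ) / 2)) *
      rexp (K * lam * (ξ ω + δ ω)), ?_, ae_of_all _ fun ω => rfl⟩
    have hxm' : Measurable[MeasurableSpace.comap (fun ω => ξ ω + δ ω) inferInstance]
        (fun ω => ξ ω + δ ω) := comap_measurable _
    exact Measurable.stronglyMeasurable
      ((Real.measurable_exp.comp (hxm'.const_mul (K * lam))).const_mul _)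
end
end
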